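/- arXiv:cond-mat/0506695 — 5 statements merged into one kernel-verified Lean document; each statement's English description precedes it below -/
import Mathlib

section
/- For every μ ∈ ℝ and every U ≥ 0, the HFz ground-state energy admits the one-matrix representation E^{hfz}_{μ,U} = min over one-particle density matrices γ of [ Tr{(-Δ - μ·Id)γ} + Tr{[-Δ - μ·Id + U·diag(ρ)]_-} ], where ρ(x) = γ_{x,x} and diag(ρ) is the diagonal matrix with entries ρ(x). -/
open Matrix
open scoped BigOperators Classical ComplexOrder

noncomputable section

/-- The discrete torus `Λ = (ℤ/Lℤ)^d`. -/
abbrev Lam (d L : ℕ) : Type := Fin d → ZMod L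

/-- `x` and `y` are nearest neighbors on the torus (ℓ¹-distance 1). -/
def isNN {d L : ℕ} (x y : Lam d L) : Prop :=
  ∃ ν : Fin d, (x ν = y ν + 1 ∨ x ν + 1 = y ν) ∧ ∀ μ : Fin d, μ ≠ ν → x μ = y μ

/-- The discrete Laplacian `Δ = T - 2d·Id` on the torus. -/
def lap (d L : ℕ) : Matrix (Lam d L) (Lam d L) ℂ :=
  (Matrix.of fun x y => if isNN x y then (1 : ℂ) else 0) - (2 * (d : ℂ)) • 1

/-- A one-particle density matrix: hermitian with `0 ≤ γ ≤ 1` as quadratic forms. -/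
def IsDM {d L : ℕ} [NeZero L] (γ : Matrix (Lam d L) (Lam d L) ℂ) : Prop :=
  γ.PosSemidef ∧ (1 - γ).PosSemidef

/-- `Tr{[X]_-}`: the sum of the negative eigenvalues of a hermitian matrix `X`
(junk value `0` if `X` is not hermitian). -/
def negTrace {n : Type} [Fintype n] [DecidableEq n] (X : Matrix n n ℂ) : ℝ :=
  if hX : X.IsHermitian then ∑ i, min (hX.eigenvalues i) 0 else 0

/-- The HFz energy functional. -/
def hfzE {d L : ℕ} [NeZero L] (μ U : ℝ) (γu γd : Matrix (Lam d L) (Lam d L) ℂ) : ℝ :=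
  (((-(lap d L) - (μ : ℂ) • 1) * (γu + γd)).trace).re
    + U * ∑ x, (γu x x).re * (γd x x).re

/-- The set of HFz energy values over pairs of one-particle density matrices. -/
def hfzEnergies (d L : ℕ) [NeZero L] (μ U : ℝ) : Set ℝ :=
  { E | ∃ γu γd : Matrix (Lam d L) (Lam d L) ℂ, IsDM γu ∧ IsDM γd ∧ hfzE μ U γu γd = E }

/-! ### Auxiliary lemmas -/

section Aux

variable {n : Type} [Fintype n] [DecidableEq n]

lemma trace_diagonal_mul' (d : n → ℂ) (M : Matrix n n ℂ) :
    (Matrix.diagonal d * M).trace = ∑ i, d i * M i i := by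
  simp [Matrix.trace, Matrix.diag, Matrix.diagonal_mul]

lemma diagRe_nonneg' {M : Matrix n n ℂ} (hM : M.PosSemidef) (i : n) : 0 ≤ (M i i).re := by
  have h := hM.re_dotProduct_nonneg (Pi.single i 1)
  have hs : star (Pi.single i 1 : n → ℂ) = Pi.single i 1 := by
    funext j
    by_cases hj : j = i <;> simp [Pi.single_apply, hj]
  rw [hs, single_dotProduct, Matrix.mulVec_single] at h
  simpa using h

lemma min_le_mul_of_mem_Icc {a c : ℝ} (hc0 : 0 ≤ c) (hc1 : c ≤ 1) : min a 0 ≤ a * c := by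
  rcases le_or_gt 0 a with h | h
  · exact (min_le_right a 0).trans (mul_nonneg h hc0)
  · have : a * 1 ≤ a * c := mul_le_mul_of_nonpos_left hc1 h.le
    rw [mul_one] at this
    exact (min_le_left a 0).trans this

lemma negTrace_eq {A : Matrix n n ℂ} (hA : A.IsHermitian) :
    negTrace A = ∑ i, min (hA.eigenvalues i) 0 := by
  rw [negTrace, dif_pos hA]

/-- lower bound: for hermitian `A` and a density matrix `γ`,
`Tr{[A]_-} ≤ Re Tr(Aγ)`. -/
lemma trace_ge_negSum {A γ : Matrix n n ℂ} (hA : A.IsHermitian)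
    (h1 : γ.PosSemidef) (h2 : (1 - γ).PosSemidef) :
    ∑ i, min (hA.eigenvalues i) 0 ≤ ((A * γ).trace).re := by
  set V : Matrix n n ℂ := (hA.eigenvectorUnitary : Matrix n n ℂ) with hV
  have hVV : Vᴴ * V = 1 := by
    have := (Matrix.mem_unitaryGroup_iff').mp hA.eigenvectorUnitary.2
    rwa [Matrix.star_eq_conjTranspose] at this
  set γ' : Matrix n n ℂ := Vᴴ * γ * V with hγ'
  have hPSD : γ'.PosSemidef := h1.conjTranspose_mul_mul_same V
  have hPSD1 : (1 - γ').PosSemidef := by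
    have h1γ : 1 - γ' = Vᴴ * (1 - γ) * V := by
      rw [Matrix.mul_sub, Matrix.sub_mul, Matrix.mul_one, hVV, hγ']
    rw [h1γ]
    exact h2.conjTranspose_mul_mul_same V
  have htr : (A * γ).trace = ∑ i, (hA.eigenvalues i : ℂ) * γ' i i := by
    conv_lhs => rw [hA.spectral_theorem, Unitary.conjStarAlgAut_apply]
    rw [Matrix.star_eq_conjTranspose]
    have : V * Matrix.diagonal (RCLike.ofReal ∘ hA.eigenvalues) * Vᴴ * γ
        = (V * Matrix.diagonal (RCLike.ofReal ∘ hA.eigenvalues)) * (Vᴴ * γ) := by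
      simp only [Matrix.mul_assoc]
    rw [this, Matrix.trace_mul_comm]
    have : Vᴴ * γ * (V * Matrix.diagonal (RCLike.ofReal ∘ hA.eigenvalues))
        = (Vᴴ * γ * V) * Matrix.diagonal (RCLike.ofReal ∘ hA.eigenvalues) := by
      simp only [Matrix.mul_assoc]
    rw [this, Matrix.trace_mul_comm, trace_diagonal_mul']
    rfl
  have hre : ((A * γ).trace).re = ∑ i, hA.eigenvalues i * (γ' i i).re := by
    rw [htr, Complex.re_sum]
    exact Finset.sum_congr rfl fun i _ => Complex.re_ofReal_mul _ _
  rw [hre]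
  refine Finset.sum_le_sum fun i _ => ?_
  refine min_le_mul_of_mem_Icc (diagRe_nonneg' hPSD i) ?_
  have := diagRe_nonneg' hPSD1 i
  have h1i : ((1 - γ') i i).re = 1 - (γ' i i).re := by
    simp [Matrix.sub_apply, Matrix.one_apply_eq]
  rw [h1i] at this
  linarith

/-- the minimum is attained by the spectral projection onto negative eigenvalues. -/
lemma exists_achiever {A : Matrix n n ℂ} (hA : A.IsHermitian) :
    ∃ P : Matrix n n ℂ, P.PosSemidef ∧ (1 - P).PosSemidef ∧
      ((A * P).trace).re = ∑ i, min (hA.eigenvalues i) 0 := by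
  set V : Matrix n n ℂ := (hA.eigenvectorUnitary : Matrix n n ℂ) with hV
  have hVV : Vᴴ * V = 1 := by
    have := (Matrix.mem_unitaryGroup_iff').mp hA.eigenvectorUnitary.2
    rwa [Matrix.star_eq_conjTranspose] at this
  have hVV' : V * Vᴴ = 1 := by
    have := (Matrix.mem_unitaryGroup_iff).mp hA.eigenvectorUnitary.2
    rwa [Matrix.star_eq_conjTranspose] at this
  set q : n → ℂ := fun i => if hA.eigenvalues i < 0 then (1 : ℂ) else 0 with hq
  refine ⟨V * Matrix.diagonal q * Vᴴ, ?_, ?_, ?_⟩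
  · refine Matrix.PosSemidef.mul_mul_conjTranspose_same ?_ V
    refine Matrix.posSemidef_diagonal_iff.mpr fun i => ?_
    by_cases h : hA.eigenvalues i < 0 <;> simp [hq, h]
  · have h1 : 1 - V * Matrix.diagonal q * Vᴴ
        = V * Matrix.diagonal (fun i => 1 - q i) * Vᴴ := by
      have : Matrix.diagonal (fun i => 1 - q i)
          = 1 - Matrix.diagonal q := by
        ext i j
        by_cases h : i = j <;> simp [Matrix.diagonal_apply, Matrix.one_apply, h]
      rw [this, Matrix.mul_sub, Matrix.sub_mul, Matrix.mul_one, hVV']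
    rw [h1]
    refine Matrix.PosSemidef.mul_mul_conjTranspose_same ?_ V
    refine Matrix.posSemidef_diagonal_iff.mpr fun i => ?_
    by_cases h : hA.eigenvalues i < 0 <;> simp [hq, h]
  · have htr : (A * (V * Matrix.diagonal q * Vᴴ)).trace
        = ∑ i, (hA.eigenvalues i : ℂ) * q i := by
      conv_lhs => rw [hA.spectral_theorem, Unitary.conjStarAlgAut_apply]
      rw [Matrix.star_eq_conjTranspose]
      have h1 : V * Matrix.diagonal (RCLike.ofReal ∘ hA.eigenvalues) * Vᴴ *
          (V * Matrix.diagonal q * Vᴴ)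
          = V * (Matrix.diagonal (RCLike.ofReal ∘ hA.eigenvalues) * (Vᴴ * V)
              * Matrix.diagonal q) * Vᴴ := by simp only [Matrix.mul_assoc]
      rw [h1, hVV, Matrix.mul_one, Matrix.trace_mul_comm, ← Matrix.mul_assoc, hVV, Matrix.one_mul,
        Matrix.diagonal_mul_diagonal, Matrix.trace_diagonal]
      rfl
    rw [htr, Complex.re_sum]
    refine Finset.sum_congr rfl fun i _ => ?_
    by_cases h : hA.eigenvalues i < 0
    · simp [hq, h, min_eq_left h.le]
    · simp [hq, h, min_eq_right (not_lt.mp h)]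

end Aux

section HFZ

variable {d L : ℕ} [NeZero L]

lemma isNN_symm {x y : Lam d L} (h : isNN x y) : isNN y x := by
  obtain ⟨ν, h1, h2⟩ := h
  exact ⟨ν, h1.elim (fun h => Or.inr h.symm) (fun h => Or.inl h.symm),
    fun μ hμ => (h2 μ hμ).symm⟩

lemma lap_isHermitian : (lap d L).IsHermitian := by
  have h1 : (Matrix.of fun x y => if isNN x y then (1 : ℂ) else 0 :
      Matrix (Lam d L) (Lam d L) ℂ).IsHermitian := by
    ext x y
    simp only [Matrix.conjTranspose_apply, Matrix.of_apply]
    by_cases h : isNN y x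
    · rw [if_pos h, if_pos (isNN_symm h)]; simp
    · rw [if_neg h, if_neg (fun hc => h (isNN_symm hc))]; simp
  have h2 : ((2 * (d : ℂ)) • (1 : Matrix (Lam d L) (Lam d L) ℂ)).IsHermitian := by
    show ((2 * (d : ℂ)) • (1 : Matrix (Lam d L) (Lam d L) ℂ))ᴴ = _
    rw [Matrix.conjTranspose_smul, Matrix.conjTranspose_one]
    simp
  exact h1.sub h2

lemma H_isHermitian (μ : ℝ) :
    (-(lap d L) - (μ : ℂ) • (1 : Matrix (Lam d L) (Lam d L) ℂ)).IsHermitian := by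
  refine Matrix.IsHermitian.sub lap_isHermitian.neg ?_
  show (((μ : ℂ)) • (1 : Matrix (Lam d L) (Lam d L) ℂ))ᴴ = _
  rw [Matrix.conjTranspose_smul, Matrix.conjTranspose_one, Complex.star_def, Complex.conj_ofReal]

lemma A_isHermitian (μ U : ℝ) (ρ : Lam d L → ℝ) :
    (-(lap d L) - (μ : ℂ) • (1 : Matrix (Lam d L) (Lam d L) ℂ)
      + Matrix.diagonal (fun x => (U * ρ x : ℂ))).IsHermitian := by
  refine Matrix.IsHermitian.add (H_isHermitian μ) ?_
  refine Matrix.isHermitian_diagonal_of_self_adjoint _ ?_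
  funext x
  simp [Complex.conj_ofReal]

/-- decomposition of the HFz functional. -/
lemma hfzE_decomp (μ U : ℝ) (γu γd : Matrix (Lam d L) (Lam d L) ℂ) :
    hfzE μ U γu γd
      = (((-(lap d L) - (μ : ℂ) • 1) * γu).trace).re
        + ((((-(lap d L) - (μ : ℂ) • 1)
            + Matrix.diagonal (fun x => (U * (γu x x).re : ℂ))) * γd).trace).re := by
  rw [hfzE, Matrix.mul_add, Matrix.trace_add, Complex.add_re, Matrix.add_mul,
    Matrix.trace_add, Complex.add_re, trace_diagonal_mul', Complex.re_sum]
  have : ∀ x : Lam d L, ((U * (γu x x).re : ℂ) * γd x x).re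
      = U * ((γu x x).re * (γd x x).re) := by
    intro x
    rw [mul_assoc, Complex.re_ofReal_mul, Complex.re_ofReal_mul]
  rw [Finset.sum_congr rfl fun x _ => this x, ← Finset.mul_sum]
  ring

end HFZ

/-- one-matrix reduction, Eqs. (2.4)–(2.5): for every `μ` and `U ≥ 0`,
the HFz ground-state energy equals the minimum over a single one-particle density matrix
`γ` of `Tr{(-Δ-μ)γ} + Tr{[-Δ-μ+U·diag(ρ)]_-}`, where `ρ(x) = γ_{x,x}`. -/
theorem hfz_one_matrix_reduction (d L : ℕ) (hd : 1 ≤ d) [NeZero L]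
    (hLeven : Even L) (hL2 : 2 ≤ L) (μ U : ℝ) (hU : 0 ≤ U) :
    sInf (hfzEnergies d L μ U) =
      sInf { E : ℝ | ∃ γ : Matrix (Lam d L) (Lam d L) ℂ, IsDM γ ∧
        (((-(lap d L) - (μ : ℂ) • 1) * γ).trace).re
          + negTrace (-(lap d L) - (μ : ℂ) • 1
              + Matrix.diagonal (fun x => (U * (γ x x).re : ℂ))) = E } := by
  set H : Matrix (Lam d L) (Lam d L) ℂ := -(lap d L) - (μ : ℂ) • 1 with hH
  have hHherm : H.IsHermitian := H_isHermitian μ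
  set S := hfzEnergies d L μ U with hS
  set T := { E : ℝ | ∃ γ : Matrix (Lam d L) (Lam d L) ℂ, IsDM γ ∧
      ((H * γ).trace).re
        + negTrace (H + Matrix.diagonal (fun x => (U * (γ x x).re : ℂ))) = E } with hT
  -- each element of T is in S
  have hTS : T ⊆ S := by
    rintro E ⟨γ, hγ, hE⟩
    have hAherm : (H + Matrix.diagonal (fun x => (U * (γ x x).re : ℂ))).IsHermitian :=
      A_isHermitian μ U _
    obtain ⟨P, hP1, hP2, hPtr⟩ := exists_achiever hAherm
    refine ⟨γ, P, hγ, ⟨hP1, hP2⟩, ?_⟩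
    rw [hfzE_decomp, ← hH, ← hE, negTrace_eq hAherm, ← hPtr]
  -- every element of S dominates an element of T
  have hST : ∀ E ∈ S, ∃ E' ∈ T, E' ≤ E := by
    rintro E ⟨γu, γd, hγu, hγd, hE⟩
    have hAherm : (H + Matrix.diagonal (fun x => (U * (γu x x).re : ℂ))).IsHermitian :=
      A_isHermitian μ U _
    refine ⟨((H * γu).trace).re
      + negTrace (H + Matrix.diagonal (fun x => (U * (γu x x).re : ℂ))), ⟨γu, hγu, rfl⟩, ?_⟩
    rw [← hE, hfzE_decomp, ← hH, negTrace_eq hAherm]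
    have := trace_ge_negSum hAherm hγd.1 hγd.2
    linarith
  -- uniform lower bound on S
  have hSbdd : BddBelow S := by
    refine ⟨2 * ∑ i, min (hHherm.eigenvalues i) 0, ?_⟩
    rintro E ⟨γu, γd, hγu, hγd, hE⟩
    have h1 := trace_ge_negSum hHherm hγu.1 hγu.2
    have h2 := trace_ge_negSum hHherm hγd.1 hγd.2
    have h3 : 0 ≤ U * ∑ x, (γu x x).re * (γd x x).re := by
      refine mul_nonneg hU (Finset.sum_nonneg fun x _ => ?_)
      exact mul_nonneg (diagRe_nonneg' hγu.1 x) (diagRe_nonneg' hγd.1 x)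
    have hsplit : hfzE μ U γu γd
        = ((H * γu).trace).re + ((H * γd).trace).re
          + U * ∑ x, (γu x x).re * (γd x x).re := by
      rw [hfzE, Matrix.mul_add, Matrix.trace_add, Complex.add_re, ← hH]
    rw [← hE, hsplit]
    linarith
  have hTne : T.Nonempty := by
    refine ⟨_, ⟨0, ⟨Matrix.PosSemidef.zero, by simpa using Matrix.PosSemidef.one⟩, rfl⟩⟩
  have hSne : S.Nonempty := ⟨_, hTS hTne.choose_spec⟩
  have hTbdd : BddBelow T := hSbdd.mono hTS
  refine le_antisymm (csInf_le_csInf hSbdd hTne hTS) ?_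
  refine le_csInf hSne fun E hE => ?_
  obtain ⟨E', hE'T, hE'E⟩ := hST E hE
  exact (csInf_le hTbdd hE'T).trans hE'E
end
end

section
/- Let μ > 0, U > 0, and δ ≥ 2μ/U. Let γ be a one-particle density matrix with density ρ, set Ω := {x ∈ Λ : ρ(x) < δ}, and define the modified density ρ̃ by ρ̃(x) := ρ(x) for x ∈ Λ∖Ω and ρ̃(x) := min{μ/(2U), ρ(x)} for x ∈ Ω, viewed as a diagonal matrix. Then Tr{[-Δ - μ·Id + U·ρ̃]_-} ≥ Tr{[P_Ω(-Δ - μ·Id + U·ρ̃)P_Ω]_-} - (8d²/(Uδ))·|∂Ω|. -/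
open Matrix
open scoped BigOperators Classical ComplexOrder

noncomputable section

/-- The diagonal orthogonal projection `P_A` onto the coordinates in `A`. -/
def proj {d L : ℕ} (A : Set (Lam d L)) : Matrix (Lam d L) (Lam d L) ℂ :=
  Matrix.diagonal fun x => if x ∈ A then 1 else 0

/-- The boundary `∂Ω := {x ∈ Ω : x has a nearest neighbor outside Ω}`. -/
def bdry {d L : ℕ} (Ω : Set (Lam d L)) : Set (Lam d L) :=
  {x | x ∈ Ω ∧ ∃ y, y ∉ Ω ∧ isNN x y}

namespace FD

set_option linter.unusedSectionVars false

section Abstract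
variable {n : Type} [Fintype n] [DecidableEq n]

lemma diag_nonneg {M : Matrix n n ℂ} (hM : M.PosSemidef) (x : n) : 0 ≤ M x x := by
  have := hM.dotProduct_mulVec_nonneg (Pi.single x 1)
  simpa [dotProduct, Matrix.mulVec, Pi.single_apply] using this

lemma re_trace_mul_nonneg {A B : Matrix n n ℂ} (hA : A.PosSemidef) (hB : B.PosSemidef) :
    0 ≤ ((A * B).trace).re := by
  obtain ⟨C, rfl⟩ : ∃ C : Matrix n n ℂ, B = Cᴴ * C := by
    open scoped MatrixOrder in exact CStarAlgebra.nonneg_iff_eq_star_mul_self.mp hB.nonneg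
  have h1 : (A * (Cᴴ * C)).trace = (C * A * Cᴴ).trace := by
    rw [← Matrix.mul_assoc, Matrix.trace_mul_cycle]
  rw [h1]
  have hP : (C * A * Cᴴ).PosSemidef := hA.mul_mul_conjTranspose_same C
  rw [Matrix.trace]
  rw [Complex.re_sum]
  exact Finset.sum_nonneg fun i _ => (Complex.le_def.mp (diag_nonneg hP i)).1

lemma negTrace_le_re_trace_mul {X γ : Matrix n n ℂ} (hX : X.IsHermitian)
    (hγ : γ.PosSemidef) (hγ1 : (1 - γ).PosSemidef) :
    negTrace X ≤ ((X * γ).trace).re := by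
  set V : Matrix n n ℂ := (hX.eigenvectorUnitary : Matrix n n ℂ) with hV
  have hVV : star V * V = 1 := Matrix.mem_unitaryGroup_iff'.mp hX.eigenvectorUnitary.2
  have hVV' : V * star V = 1 := Matrix.mem_unitaryGroup_iff.mp hX.eigenvectorUnitary.2
  set D : Matrix n n ℂ := Matrix.diagonal (RCLike.ofReal ∘ hX.eigenvalues) with hD
  set γ' : Matrix n n ℂ := star V * γ * V with hγ'
  have hspec : X = V * D * star V := hX.spectral_theorem
  have htr : (X * γ).trace = (D * γ').trace := by
    rw [hspec, hγ']
    have h1 : V * D * star V * γ = V * (D * (star V * γ)) := by noncomm_ring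
    rw [h1, Matrix.trace_mul_comm]
    congr 1
    noncomm_ring
  have hγ'ps : γ'.PosSemidef := by
    have := hγ.conjTranspose_mul_mul_same V
    simpa [hγ', Matrix.star_eq_conjTranspose] using this
  have hγ'1 : (1 - γ').PosSemidef := by
    have h2 : (1 : Matrix n n ℂ) - γ' = Vᴴ * (1 - γ) * V := by
      rw [Matrix.mul_sub, Matrix.sub_mul, ← Matrix.star_eq_conjTranspose, Matrix.mul_one, hVV]
    rw [h2]
    exact hγ1.conjTranspose_mul_mul_same V
  have hdiagre : ∀ i, 0 ≤ (γ' i i).re ∧ (γ' i i).re ≤ 1 := by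
    intro i
    constructor
    · exact (Complex.le_def.mp (diag_nonneg hγ'ps i)).1
    · have := (Complex.le_def.mp (diag_nonneg hγ'1 i)).1
      simp only [Matrix.sub_apply, Matrix.one_apply_eq, Complex.sub_re, Complex.one_re,
        Complex.zero_re] at this
      linarith
  have hDγ' : (D * γ').trace = ∑ i, (hX.eigenvalues i : ℂ) * γ' i i := by
    rw [Matrix.trace]
    congr 1
    ext i
    simp [hD, Matrix.diag, Matrix.mul_apply, Matrix.diagonal_apply, Finset.sum_ite_eq]
  rw [negTrace, dif_pos hX, htr, hDγ', Complex.re_sum]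
  apply Finset.sum_le_sum
  intro i _
  have h1 : ((hX.eigenvalues i : ℂ) * γ' i i).re = hX.eigenvalues i * (γ' i i).re := by
    simp [Complex.mul_re]
  rw [h1]
  obtain ⟨h0, hle1⟩ := hdiagre i
  rcases le_or_gt 0 (hX.eigenvalues i) with h | h
  · rw [min_eq_right h]
    positivity
  · rw [min_eq_left h.le]
    nlinarith

lemma exists_optimal {X : Matrix n n ℂ} (hX : X.IsHermitian) :
    ∃ γ : Matrix n n ℂ, γ.PosSemidef ∧ (1 - γ).PosSemidef ∧
      ((X * γ).trace).re = negTrace X := by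
  set V : Matrix n n ℂ := (hX.eigenvectorUnitary : Matrix n n ℂ) with hV
  have hVV : star V * V = 1 := Matrix.mem_unitaryGroup_iff'.mp hX.eigenvectorUnitary.2
  have hVV' : V * star V = 1 := Matrix.mem_unitaryGroup_iff.mp hX.eigenvectorUnitary.2
  set e : n → ℂ := fun i => if hX.eigenvalues i < 0 then 1 else 0 with he
  refine ⟨V * Matrix.diagonal e * star V, ?_, ?_, ?_⟩
  · have hd : (Matrix.diagonal e).PosSemidef := by
      apply Matrix.PosSemidef.diagonal
      intro i
      by_cases h : hX.eigenvalues i < 0 <;> simp [he, h]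
    have := hd.mul_mul_conjTranspose_same V
    simpa [Matrix.star_eq_conjTranspose] using this
  · have h1 : (1 : Matrix n n ℂ) - V * Matrix.diagonal e * star V
        = V * Matrix.diagonal (fun i => 1 - e i) * star V := by
      have : Matrix.diagonal (fun i => 1 - e i) = 1 - Matrix.diagonal e := by
        rw [← Matrix.diagonal_one, Matrix.diagonal_sub]
      rw [this, Matrix.mul_sub, Matrix.sub_mul, Matrix.mul_one, hVV']
    rw [h1]
    have hd : (Matrix.diagonal (fun i => 1 - e i)).PosSemidef := by
      apply Matrix.PosSemidef.diagonal
      intro i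
      by_cases h : hX.eigenvalues i < 0 <;> simp [he, h]
    have := hd.mul_mul_conjTranspose_same V
    simpa [Matrix.star_eq_conjTranspose] using this
  · have hspec : X = V * Matrix.diagonal (RCLike.ofReal ∘ hX.eigenvalues) * star V :=
      hX.spectral_theorem
    have htr : (X * (V * Matrix.diagonal e * star V)).trace
        = ((Matrix.diagonal (RCLike.ofReal ∘ hX.eigenvalues) * Matrix.diagonal e)).trace := by
      conv_lhs => rw [hspec]
      have h2 : V * Matrix.diagonal (RCLike.ofReal ∘ hX.eigenvalues) * star V
            * (V * Matrix.diagonal e * star V)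
          = V * (Matrix.diagonal (RCLike.ofReal ∘ hX.eigenvalues) * (star V * V)
            * Matrix.diagonal e * star V) := by noncomm_ring
      rw [h2, Matrix.trace_mul_comm, hVV]
      have h3 : Matrix.diagonal (RCLike.ofReal ∘ hX.eigenvalues) * 1 * Matrix.diagonal e
            * star V * V
          = Matrix.diagonal (RCLike.ofReal ∘ hX.eigenvalues) * Matrix.diagonal e
            * (star V * V) := by noncomm_ring
      rw [h3, hVV, Matrix.mul_one]
    rw [htr, Matrix.diagonal_mul_diagonal, Matrix.trace_diagonal, negTrace, dif_pos hX,
      Complex.re_sum]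
    apply Finset.sum_congr rfl
    intro i _
    by_cases h : hX.eigenvalues i < 0
    · simp [he, h, min_eq_left h.le]
    · push_neg at h
      simp [he, not_lt.mpr h, min_eq_right h]

lemma negTrace_mono {X Y : Matrix n n ℂ} (hY : Y.IsHermitian)
    (hXY : (X - Y).PosSemidef) : negTrace Y ≤ negTrace X := by
  have hX : X.IsHermitian := by
    have := hXY.1.add hY
    simpa using this
  obtain ⟨γ, hγ, hγ1, hopt⟩ := exists_optimal hX
  have h1 : negTrace Y ≤ ((Y * γ).trace).re := negTrace_le_re_trace_mul hY hγ hγ1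
  have h2 : 0 ≤ (((X - Y) * γ).trace).re := re_trace_mul_nonneg hXY hγ
  have h3 : ((X * γ).trace).re = ((Y * γ).trace).re + (((X - Y) * γ).trace).re := by
    rw [Matrix.sub_mul, Matrix.trace_sub]
    simp
  linarith [hopt ▸ h3]

lemma negTrace_superadd {X Y : Matrix n n ℂ} (hX : X.IsHermitian) (hY : Y.IsHermitian) :
    negTrace X + negTrace Y ≤ negTrace (X + Y) := by
  obtain ⟨γ, hγ, hγ1, hopt⟩ := exists_optimal (hX.add hY)
  have h1 : negTrace X ≤ ((X * γ).trace).re := negTrace_le_re_trace_mul hX hγ hγ1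
  have h2 : negTrace Y ≤ ((Y * γ).trace).re := negTrace_le_re_trace_mul hY hγ hγ1
  have h3 : (((X + Y) * γ).trace).re = ((X * γ).trace).re + ((Y * γ).trace).re := by
    rw [Matrix.add_mul, Matrix.trace_add]
    simp
  linarith [hopt ▸ h3]

lemma negTrace_of_nonpos {Z : Matrix n n ℂ} (h : (-Z).PosSemidef) :
    negTrace Z = (Z.trace).re := by
  have hZ : Z.IsHermitian := by
    have := h.1
    simpa using this.neg
  have hev : ∀ i, hZ.eigenvalues i ≤ 0 := by
    intro i
    have h1 := h.re_dotProduct_nonneg ⇑(hZ.eigenvectorBasis i)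
    have h2 := hZ.eigenvalues_eq i
    rw [Matrix.neg_mulVec, dotProduct_neg, map_neg] at h1
    rw [h2]
    simpa using h1
  have htr : Z.trace = ∑ i, (hZ.eigenvalues i : ℂ) := by
    conv_lhs => rw [hZ.spectral_theorem, Unitary.conjStarAlgAut_apply]
    rw [Matrix.trace_mul_comm]
    rw [← Matrix.mul_assoc, Matrix.mem_unitaryGroup_iff'.mp hZ.eigenvectorUnitary.2, one_mul,
      Matrix.trace_diagonal]
    rfl
  rw [negTrace, dif_pos hZ, htr, Complex.re_sum]
  apply Finset.sum_congr rfl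
  intro i _
  simp [min_eq_left (hev i)]

lemma psd_smul {A : Matrix n n ℂ} (hA : A.PosSemidef) {c : ℝ} (hc : 0 ≤ c) :
    (((c : ℂ)) • A).PosSemidef := by
  refine Matrix.PosSemidef.of_dotProduct_mulVec_nonneg ?_ ?_
  · unfold Matrix.IsHermitian
    rw [Matrix.conjTranspose_smul, hA.1.eq]
    congr 1
    simp [Complex.conj_ofReal]
  · intro f
    rw [Matrix.smul_mulVec, dotProduct_smul]
    have h1 : (0:ℂ) ≤ (c:ℂ) := Complex.zero_le_real.mpr hc
    rw [smul_eq_mul]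
    exact mul_nonneg h1 (hA.dotProduct_mulVec_nonneg f)

lemma herm_real_smul {A : Matrix n n ℂ} (hA : A.IsHermitian) (c : ℝ) :
    (((c : ℂ)) • A).IsHermitian := by
  unfold Matrix.IsHermitian
  rw [Matrix.conjTranspose_smul, hA.eq]
  congr 1
  simp [Complex.conj_ofReal]

end Abstract

section Torus
variable {d L : ℕ} [NeZero L]

lemma nn_symm {x y : Lam d L} (h : isNN x y) : isNN y x := by
  obtain ⟨ν, h1, h2⟩ := h
  exact ⟨ν, by tauto, fun μ hμ => (h2 μ hμ).symm⟩

lemma card_nn (hd : 0 < d) (x : Lam d L) :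
    (Finset.univ.filter (fun y => isNN x y)).card ≤ 2 * d := by
  classical
  have : Nonempty (Fin d) := ⟨⟨0, hd⟩⟩
  set f : Lam d L → Fin d × Bool := fun y =>
    if h : isNN x y then (Classical.choose h, decide (x (Classical.choose h)
      = y (Classical.choose h) + 1)) else Classical.arbitrary _
  have hcard : ((Finset.univ : Finset (Fin d × Bool))).card = 2 * d := by
    simp [mul_comm]
  calc (Finset.univ.filter (fun y => isNN x y)).card
      ≤ (Finset.univ : Finset (Fin d × Bool)).card := by
        apply Finset.card_le_card_of_injOn f (fun a _ => Finset.mem_univ _)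
        intro y1 hy1 y2 hy2 hf
        simp only [Finset.coe_filter, Set.mem_setOf_eq, Finset.mem_univ, true_and] at hy1 hy2
        simp only [f, dif_pos hy1, dif_pos hy2, Prod.mk.injEq] at hf
        obtain ⟨hν, hb⟩ := hf
        obtain ⟨h1, h2⟩ := Classical.choose_spec hy1
        obtain ⟨h3, h4⟩ := Classical.choose_spec hy2
        rw [← hν] at h3 h4 hb
        rw [decide_eq_decide] at hb
        funext μ
        by_cases hμ : μ = Classical.choose hy1
        · rw [hμ]
          set ν := Classical.choose hy1 with hν1
          by_cases hcase : x ν = y1 ν + 1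
          · have h6 : y1 ν + 1 = y2 ν + 1 := by rw [← hcase, hb.mp hcase]
            exact add_right_cancel h6
          · have hx1 : x ν + 1 = y1 ν := h1.resolve_left hcase
            have hcase2 : ¬ (x ν = y2 ν + 1) := fun h => hcase (hb.mpr h)
            have hx2 : x ν + 1 = y2 ν := h3.resolve_left hcase2
            rw [← hx1, hx2]
        · rw [← h2 μ hμ, h4 μ hμ]
    _ = 2 * d := hcard

def T (d L : ℕ) : Matrix (Lam d L) (Lam d L) ℂ :=
  Matrix.of fun x y => if isNN x y then (1 : ℂ) else 0

lemma T_herm : (T d L).IsHermitian := by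
  ext x y
  simp only [Matrix.conjTranspose_apply, T, Matrix.of_apply]
  by_cases h : isNN y x
  · simp [h, nn_symm h]
  · have h2 : ¬ isNN x y := fun hh => h (nn_symm hh)
    simp [h, h2]

lemma quad_real {M : Matrix (Lam d L) (Lam d L) ℂ} (hM : M.IsHermitian) (f : Lam d L → ℂ) :
    (star f ⬝ᵥ M *ᵥ f).im = 0 := by
  have h1 : star (star f ⬝ᵥ M *ᵥ f) = star f ⬝ᵥ M *ᵥ f := by
    calc star (star f ⬝ᵥ M *ᵥ f) = star (M *ᵥ f) ⬝ᵥ f := by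
          rw [Matrix.star_dotProduct, star_star]
      _ = star f ᵥ* Mᴴ ⬝ᵥ f := by rw [Matrix.star_mulVec]
      _ = star f ⬝ᵥ Mᴴ *ᵥ f := (Matrix.dotProduct_mulVec _ _ _).symm
      _ = star f ⬝ᵥ M *ᵥ f := by rw [hM.eq]
  exact Complex.conj_eq_iff_im.mp h1

lemma laplacian_psd (hd : 0 < d) :
    ((2 * (d : ℂ)) • (1 : Matrix (Lam d L) (Lam d L) ℂ) - T d L).PosSemidef := by
  have hherm : ((2 * (d : ℂ)) • (1 : Matrix (Lam d L) (Lam d L) ℂ) - T d L).IsHermitian := by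
    have h1 : ((2 * (d : ℂ)) • (1 : Matrix (Lam d L) (Lam d L) ℂ)).IsHermitian := by
      unfold Matrix.IsHermitian
      rw [Matrix.conjTranspose_smul, Matrix.conjTranspose_one]
      congr 1
      simp
    exact h1.sub T_herm
  refine Matrix.PosSemidef.of_dotProduct_mulVec_nonneg hherm ?_
  intro f
  rw [Complex.le_def]
  constructor
  swap
  · exact (quad_real hherm f).symm
  simp only [Complex.zero_re]
  -- compute the real part
  have hz : (star f ⬝ᵥ ((2 * (d : ℂ)) • (1 : Matrix (Lam d L) (Lam d L) ℂ) - T d L) *ᵥ f)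
      = 2 * (d : ℂ) * (star f ⬝ᵥ f) - star f ⬝ᵥ (T d L *ᵥ f) := by
    rw [Matrix.sub_mulVec, dotProduct_sub, Matrix.smul_mulVec, Matrix.one_mulVec,
      dotProduct_smul]
    simp [smul_eq_mul]
  rw [hz]
  have hff : (star f ⬝ᵥ f).re = ∑ x, Complex.normSq (f x) := by
    simp [dotProduct, Complex.re_sum, Complex.normSq_apply]
  have hTf : (star f ⬝ᵥ (T d L *ᵥ f)).re
      = ∑ x, ∑ y, if isNN x y then ((starRingEnd ℂ) (f x) * f y).re else 0 := by
    simp only [dotProduct, Matrix.mulVec, T, Matrix.of_apply, Pi.star_apply,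
      Complex.re_sum, dotProduct]
    apply Finset.sum_congr rfl; intro x _
    rw [Finset.mul_sum, Complex.re_sum]
    apply Finset.sum_congr rfl; intro y _
    by_cases h : isNN x y <;> simp [h, RCLike.star_def]
  have hbound : ∑ x, ∑ y, (if isNN x y then ((starRingEnd ℂ) (f x) * f y).re else 0)
      ≤ 2 * (d : ℝ) * ∑ x, Complex.normSq (f x) := by
    have step1 : ∀ x y : Lam d L, (if isNN x y then ((starRingEnd ℂ) (f x) * f y).re else 0)
        ≤ (if isNN x y then (Complex.normSq (f x) + Complex.normSq (f y))/2 else 0) := by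
      intro x y
      by_cases h : isNN x y
      · simp only [h, if_true]
        have h1 : ((starRingEnd ℂ) (f x) * f y).re ≤ ‖(starRingEnd ℂ) (f x) * f y‖ :=
          Complex.re_le_norm _
        have h2 : ‖(starRingEnd ℂ) (f x) * f y‖
            = ‖f x‖ * ‖f y‖ := by
          rw [norm_mul, Complex.norm_conj]
        have h3 : Complex.normSq (f x) = ‖f x‖^2 := (Complex.sq_norm _).symm
        have h4 : Complex.normSq (f y) = ‖f y‖^2 := (Complex.sq_norm _).symm
        rw [h3, h4]
        nlinarith [norm_nonneg (f x), norm_nonneg (f y),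
          sq_nonneg (‖f x‖ - ‖f y‖)]
      · simp [h]
    calc ∑ x, ∑ y, (if isNN x y then ((starRingEnd ℂ) (f x) * f y).re else 0)
        ≤ ∑ x, ∑ y, (if isNN x y then (Complex.normSq (f x) + Complex.normSq (f y))/2 else 0) :=
          Finset.sum_le_sum fun x _ => Finset.sum_le_sum fun y _ => step1 x y
      _ = ∑ x : Lam d L, ∑ y : Lam d L, (if isNN x y then Complex.normSq (f x) else 0) := by
          have hsplit : ∀ x y : Lam d L,
              (if isNN x y then (Complex.normSq (f x) + Complex.normSq (f y))/2 else 0)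
              = (if isNN x y then Complex.normSq (f x)/2 else 0)
                + (if isNN x y then Complex.normSq (f y)/2 else 0) := by
            intro x y
            by_cases h : isNN x y
            · simp only [h, if_true]; ring
            · simp [h]
          simp_rw [hsplit, Finset.sum_add_distrib]
          have hswap : ∑ x : Lam d L, ∑ y : Lam d L, (if isNN x y then Complex.normSq (f y)/2 else 0)
              = ∑ x : Lam d L, ∑ y : Lam d L, (if isNN x y then Complex.normSq (f x)/2 else 0) := by
            rw [Finset.sum_comm]
            apply Finset.sum_congr rfl; intro x _
            apply Finset.sum_congr rfl; intro y _
            by_cases h : isNN x y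
            · simp [h, nn_symm h]
            · have h2 : ¬ isNN y x := fun hh => h (nn_symm hh)
              simp [h, h2]
          rw [hswap, ← Finset.sum_add_distrib]
          apply Finset.sum_congr rfl; intro x _
          rw [← Finset.sum_add_distrib]
          apply Finset.sum_congr rfl; intro y _
          by_cases h : isNN x y
          · simp only [h, if_true]; ring
          · simp [h]
      _ ≤ ∑ x : Lam d L, 2 * (d:ℝ) * Complex.normSq (f x) := by
          apply Finset.sum_le_sum; intro x _
          have hsum : ∑ y : Lam d L, (if isNN x y then Complex.normSq (f x) else 0)
              = ((Finset.univ.filter (fun y => isNN x y)).card : ℝ) * Complex.normSq (f x) := by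
            rw [Finset.sum_ite, Finset.sum_const, Finset.sum_const_zero, add_zero, nsmul_eq_mul]
          rw [hsum]
          apply mul_le_mul_of_nonneg_right _ (Complex.normSq_nonneg _)
          have := card_nn hd x
          push_cast
          exact_mod_cast this
      _ = 2 * (d : ℝ) * ∑ x, Complex.normSq (f x) := by rw [Finset.mul_sum]
  have hre : (2 * (d : ℂ) * (star f ⬝ᵥ f) - star f ⬝ᵥ (T d L *ᵥ f)).re
      = 2 * (d:ℝ) * (star f ⬝ᵥ f).re - (star f ⬝ᵥ (T d L *ᵥ f)).re := by
    simp [Complex.sub_re, Complex.mul_re]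
  rw [hre, hff, hTf]
  linarith

end Torus

end FD

open FD in
/-- Lemma 3.2, decoupling the high and low density regions: with
`Ω = {ρ < δ}`, `δ ≥ 2μ/U`, and the modified density `ρ̃` (equal to `ρ` off `Ω` and to
`min{μ/(2U), ρ}` on `Ω`), one has
`Tr{[-Δ-μ+Uρ̃]_-} ≥ Tr{[P_Ω(-Δ-μ+Uρ̃)P_Ω]_-} - (8d²/(Uδ))|∂Ω|`. -/
theorem feshbach_decoupling_bound (d L : ℕ) (hd : 1 ≤ d) [NeZero L]
    (hLeven : Even L) (hL2 : 2 ≤ L) (μ U δ : ℝ) (hμ : 0 < μ) (hU : 0 < U)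
    (hδ : 2 * μ / U ≤ δ)
    (γ : Matrix (Lam d L) (Lam d L) ℂ) (hγ : IsDM γ)
    (Ω : Set (Lam d L)) (hΩ : Ω = {x | (γ x x).re < δ})
    (ρt : Lam d L → ℝ)
    (hρt : ∀ x, ρt x = if x ∈ Ω then min (μ / (2 * U)) (γ x x).re else (γ x x).re) :
    negTrace (proj Ω * (-(lap d L) - (μ : ℂ) • 1
          + Matrix.diagonal (fun x => (U * ρt x : ℂ))) * proj Ω)
        - 8 * d ^ 2 / (U * δ) * (bdry Ω).ncard
      ≤ negTrace (-(lap d L) - (μ : ℂ) • 1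
          + Matrix.diagonal (fun x => (U * ρt x : ℂ))) := by
  classical
  have hdpos : 0 < d := hd
  set H : Matrix (Lam d L) (Lam d L) ℂ :=
    -(lap d L) - (μ : ℂ) • 1 + Matrix.diagonal (fun x => (U * ρt x : ℂ)) with hH
  set P : Matrix (Lam d L) (Lam d L) ℂ := proj Ω with hP
  set Q : Matrix (Lam d L) (Lam d L) ℂ := 1 - P with hQ
  set g : ℝ := U * δ / 2 with hg
  have hδpos : 0 < δ := lt_of_lt_of_le (by positivity) hδ
  have hgpos : 0 < g := by rw [hg]; positivity
  have hlap : lap d L = T d L - (2 * (d : ℂ)) • 1 := rfl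
  -- Q as diagonal matrix
  have hdiag_ext : ∀ (v w : Lam d L → ℂ), (∀ x, v x = w x) →
      Matrix.diagonal v = Matrix.diagonal w := fun v w h => by rw [funext h]
  have hQdiag : Q = Matrix.diagonal (fun x => if x ∈ Ω then (0:ℂ) else 1) := by
    rw [hQ, hP]
    unfold proj
    ext x y
    by_cases hxy : x = y
    · subst hxy
      by_cases h : x ∈ Ω <;>
        simp [h, Matrix.diagonal_apply_eq, Matrix.one_apply_eq, Matrix.sub_apply]
    · simp [Matrix.one_apply_ne hxy, Matrix.diagonal_apply_ne _ hxy, Matrix.sub_apply]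
  have hPh : Pᴴ = P := by
    rw [hP]; unfold proj
    rw [Matrix.diagonal_conjTranspose]
    apply hdiag_ext
    intro x
    rw [Pi.star_apply]
    by_cases h : x ∈ Ω <;> simp [h]
  have hQh : Qᴴ = Q := by
    rw [hQ, Matrix.conjTranspose_sub, Matrix.conjTranspose_one, hPh]
  have hPP : P * P = P := by
    rw [hP]; unfold proj
    rw [Matrix.diagonal_mul_diagonal]
    apply hdiag_ext
    intro x
    by_cases h : x ∈ Ω <;> simp [h]
  have hQQ : Q * Q = Q := by
    have h1 : Q * Q = 1 - P - P + P * P := by rw [hQ]; noncomm_ring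
    rw [h1, hPP, hQ]; abel
  -- Hermiticity of H
  have hHherm : H.IsHermitian := by
    rw [hH, hlap]
    apply Matrix.IsHermitian.add
    · apply Matrix.IsHermitian.sub
      · have h1 : -(T d L - (2 * (d:ℂ)) • 1) = ((2*(d:ℝ) : ℝ):ℂ) • (1 : Matrix (Lam d L) (Lam d L) ℂ) - T d L := by
          push_cast
          abel
        rw [h1]
        exact (herm_real_smul Matrix.isHermitian_one _).sub T_herm
      · have h2 : ((μ:ℂ)) • (1 : Matrix (Lam d L) (Lam d L) ℂ) = ((μ:ℝ):ℂ) • 1 := by norm_cast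
        rw [h2]
        exact herm_real_smul Matrix.isHermitian_one μ
    · have h3 : (fun x => (U * ρt x : ℂ)) = fun x => ((U * ρt x : ℝ) : ℂ) := by
        funext x; push_cast; ring
      rw [h3]
      unfold Matrix.IsHermitian
      rw [Matrix.diagonal_conjTranspose]
      apply hdiag_ext
      intro x
      rw [Pi.star_apply]
      simp [Complex.conj_ofReal]
  set B : Matrix (Lam d L) (Lam d L) ℂ := P * H * Q with hBdef
  have hBQ : B * Q = B := by rw [hBdef, Matrix.mul_assoc (P*H) Q Q, hQQ]
  have hQB : Q * Bᴴ = Bᴴ := by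
    have h1 : (B * Q)ᴴ = Qᴴ * Bᴴ := Matrix.conjTranspose_mul _ _
    rw [hBQ, hQh] at h1
    exact h1.symm
  have hBT : Bᴴ = Q * H * P := by
    rw [hBdef, Matrix.conjTranspose_mul, Matrix.conjTranspose_mul, hQh, hPh, hHherm.eq,
      Matrix.mul_assoc]
  set c1 : ℝ := g⁻¹ with hc1
  have hc1pos : 0 < c1 := by rw [hc1]; positivity
  have hgc : (c1 : ℂ) * (g : ℂ) = 1 := by
    rw [← Complex.ofReal_mul, hc1, inv_mul_cancel₀ (ne_of_gt hgpos)]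
    norm_num
  set K : Matrix (Lam d L) (Lam d L) ℂ := P * H * P - (c1:ℂ) • (B * Bᴴ) with hK
  set C : Matrix (Lam d L) (Lam d L) ℂ := Bᴴ + (g:ℂ) • Q with hC
  have hCH : Cᴴ = B + (g:ℂ) • Q := by
    rw [hC, Matrix.conjTranspose_add, Matrix.conjTranspose_conjTranspose,
      Matrix.conjTranspose_smul, hQh]
    congr 1
    rw [Complex.star_def, Complex.conj_ofReal]
  have hCC : Cᴴ * C = B * Bᴴ + (g:ℂ) • B + (g:ℂ) • Bᴴ + ((g:ℂ) * (g:ℂ)) • Q := by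
    rw [hCH, hC, Matrix.add_mul, Matrix.mul_add, Matrix.mul_add,
      Matrix.mul_smul, Matrix.smul_mul, Matrix.smul_mul, Matrix.mul_smul, hBQ, hQB,
      smul_smul, hQQ]
    abel
  -- H - g•1 decomposition
  have hHg : H - (g:ℂ) • 1 = ((2*(d:ℂ)) • 1 - T d L)
      + Matrix.diagonal (fun x => ((U * ρt x - μ - g : ℝ) : ℂ)) := by
    rw [hH, hlap]
    ext x y
    by_cases hxy : x = y
    · subst hxy
      simp [Matrix.add_apply, Matrix.sub_apply, Matrix.neg_apply, Matrix.smul_apply,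
        Matrix.one_apply_eq, Matrix.diagonal_apply_eq, T]
      push_cast
      ring
    · simp [Matrix.add_apply, Matrix.sub_apply, Matrix.neg_apply, Matrix.smul_apply,
        Matrix.one_apply_ne hxy, Matrix.diagonal_apply_ne _ hxy, T]
  have hQHQ : Q * (H - (g:ℂ) • 1) * Q = Q * H * Q - (g:ℂ) • Q := by
    have h1 : Q * (H - (g:ℂ) • 1) = Q * H - (g:ℂ) • Q := by
      rw [Matrix.mul_sub, Matrix.mul_smul, Matrix.mul_one]
    rw [h1, Matrix.sub_mul, Matrix.smul_mul, hQQ]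
  -- R is PSD
  have hR : (Q * (H - (g:ℂ) • 1) * Q).PosSemidef := by
    rw [hHg, Matrix.mul_add, Matrix.add_mul]
    apply Matrix.PosSemidef.add
    · have h1 := (laplacian_psd (d := d) (L := L) hdpos).mul_mul_conjTranspose_same Q
      rwa [hQh] at h1
    · rw [hQdiag, Matrix.diagonal_mul_diagonal, Matrix.diagonal_mul_diagonal]
      apply Matrix.PosSemidef.diagonal
      intro x
      by_cases hx : x ∈ Ω
      · simp [hx]
      · simp only [hx, if_neg, if_false, one_mul, mul_one]
        apply Complex.zero_le_real.mpr
        have hρ : ρt x = (γ x x).re := by rw [hρt x, if_neg hx]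
        have hge : δ ≤ (γ x x).re := by
          rw [hΩ] at hx
          simp only [Set.mem_setOf_eq, not_lt] at hx
          exact hx
        rw [hρ, hg]
        nlinarith [mul_le_mul_of_nonneg_left hge (le_of_lt hU), (div_le_iff₀ hU).mp hδ]
  -- main identity
  have hsplit : H = P * H * P + B + Bᴴ + Q * H * Q := by
    rw [hBT, hBdef, hQ]
    noncomm_ring
  have hfinal : H - K = (c1:ℂ) • (Cᴴ * C) + Q * (H - (g:ℂ) • 1) * Q := by
    rw [hQHQ, hCC, hK]
    rw [smul_add, smul_add, smul_add, smul_smul, smul_smul, smul_smul, hgc]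
    simp only [one_smul]
    have h2 : (c1:ℂ) * ((g:ℂ) * (g:ℂ)) = (g:ℂ) := by
      rw [← mul_assoc, hgc, one_mul]
    rw [h2]
    calc H - (P * H * P - (c1:ℂ) • (B * Bᴴ))
        = (P * H * P + B + Bᴴ + Q * H * Q) - (P * H * P - (c1:ℂ) • (B * Bᴴ)) := by
          rw [← hsplit]
      _ = (c1:ℂ) • (B * Bᴴ) + B + Bᴴ + (g:ℂ) • Q + (Q * H * Q - (g:ℂ) • Q) := by abel
  have hHK : (H - K).PosSemidef := by
    rw [hfinal]
    apply Matrix.PosSemidef.add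
    · apply psd_smul _ (le_of_lt hc1pos)
      have h1 := Matrix.posSemidef_conjTranspose_mul_self C
      exact h1
    · exact hR
  -- hermiticity of K
  have hPHP : (P * H * P).IsHermitian := by
    have h1 := Matrix.isHermitian_mul_mul_conjTranspose P hHherm
    rwa [hPh] at h1
  have hBBh : (B * Bᴴ).IsHermitian := (Matrix.posSemidef_self_mul_conjTranspose B).1
  have hKherm : K.IsHermitian := by
    rw [hK]
    exact hPHP.sub (herm_real_smul hBBh c1)
  -- negTrace chain
  have step1 : negTrace K ≤ negTrace H := negTrace_mono hKherm hHK
  have hKsum : K = P * H * P + -((c1:ℂ) • (B * Bᴴ)) := by rw [hK]; abel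
  have step2 : negTrace (P * H * P) + negTrace (-((c1:ℂ) • (B * Bᴴ))) ≤ negTrace K := by
    rw [hKsum]
    exact negTrace_superadd hPHP (herm_real_smul hBBh c1).neg
  have step3 : negTrace (-((c1:ℂ) • (B * Bᴴ))) = -(c1 * ((B * Bᴴ).trace).re) := by
    rw [negTrace_of_nonpos (by
      rw [neg_neg]
      exact psd_smul (Matrix.posSemidef_self_mul_conjTranspose B) (le_of_lt hc1pos))]
    rw [Matrix.trace_neg, Matrix.trace_smul]
    simp [Complex.mul_re]
  -- trace bound
  have hBapply : ∀ x y, B x y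
      = (if x ∈ Ω then (1:ℂ) else 0) * (H x y) * (if y ∈ Ω then 0 else 1) := by
    intro x y
    rw [hBdef, hQdiag, hP]
    unfold proj
    rw [Matrix.mul_diagonal, Matrix.diagonal_mul]
  have hHoff : ∀ x y, x ≠ y → H x y = if isNN x y then (-1:ℂ) else 0 := by
    intro x y hxy
    rw [hH, hlap]
    simp only [Matrix.add_apply, Matrix.sub_apply, Matrix.neg_apply, Matrix.smul_apply,
      Matrix.one_apply_ne hxy, Matrix.diagonal_apply_ne _ hxy, T, Matrix.of_apply,
      smul_zero, sub_zero, add_zero]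
    by_cases h : isNN x y <;> simp [h]
  have hnormSq : ∀ x y, Complex.normSq (B x y)
      = if x ∈ Ω ∧ y ∉ Ω ∧ isNN x y then (1:ℝ) else 0 := by
    intro x y
    by_cases hx : x ∈ Ω
    · by_cases hy : y ∈ Ω
      · simp [hBapply, hx, hy]
      · have hxy : x ≠ y := fun h => hy (h ▸ hx)
        rw [hBapply, hHoff x y hxy]
        by_cases h : isNN x y <;> simp [hx, hy, h]
    · simp [hBapply, hx]
  have htrform : ((B * Bᴴ).trace).re = ∑ x, ∑ y, Complex.normSq (B x y) := by
    rw [Matrix.trace, Complex.re_sum]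
    apply Finset.sum_congr rfl
    intro x _
    rw [Matrix.diag]
    rw [Matrix.mul_apply, Complex.re_sum]
    apply Finset.sum_congr rfl
    intro y _
    rw [Matrix.conjTranspose_apply]
    rw [Complex.star_def, Complex.mul_conj]
    simp
  have hsum2 : ∀ x, (∑ y, Complex.normSq (B x y))
      ≤ (if x ∈ bdry Ω then 2*(d:ℝ) else 0) := by
    intro x
    by_cases hb : x ∈ bdry Ω
    · simp only [hb, if_true]
      calc ∑ y, Complex.normSq (B x y) ≤ ∑ y : Lam d L, (if isNN x y then (1:ℝ) else 0) := by
            apply Finset.sum_le_sum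
            intro y _
            rw [hnormSq]
            by_cases h1 : x ∈ Ω ∧ y ∉ Ω ∧ isNN x y
            · simp [h1, h1.2.2]
            · simp only [h1, if_false]
              split_ifs <;> norm_num
        _ = ((Finset.univ.filter (fun y => isNN x y)).card : ℝ) := by
            rw [Finset.sum_ite, Finset.sum_const, Finset.sum_const_zero, add_zero,
              nsmul_eq_mul, mul_one]
        _ ≤ 2*(d:ℝ) := by exact_mod_cast card_nn hdpos x
    · have hz : ∀ y, Complex.normSq (B x y) = 0 := by
        intro y
        rw [hnormSq]
        by_cases h1 : x ∈ Ω ∧ y ∉ Ω ∧ isNN x y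
        · exact absurd (show x ∈ bdry Ω from ⟨h1.1, y, h1.2.1, h1.2.2⟩) hb
        · simp [h1]
      simp [hz, hb]
  have hfincard : (bdry Ω).toFinset = Finset.univ.filter (fun x => x ∈ bdry Ω) := by
    ext z
    simp [Set.mem_toFinset]
  have htrB : ((B * Bᴴ).trace).re ≤ 2 * (d:ℝ) * (bdry Ω).ncard := by
    rw [htrform]
    calc ∑ x, ∑ y, Complex.normSq (B x y)
        ≤ ∑ x : Lam d L, (if x ∈ bdry Ω then 2*(d:ℝ) else 0) :=
          Finset.sum_le_sum fun x _ => hsum2 x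
      _ = ((Finset.univ.filter (fun x => x ∈ bdry Ω)).card : ℝ) * (2*(d:ℝ)) := by
          rw [Finset.sum_ite, Finset.sum_const, Finset.sum_const_zero, add_zero, nsmul_eq_mul]
      _ = 2 * (d:ℝ) * (bdry Ω).ncard := by
          rw [Set.ncard_eq_toFinset_card', hfincard]
          ring
  have hnneg : (0:ℝ) ≤ ((B * Bᴴ).trace).re := by
    rw [htrform]
    apply Finset.sum_nonneg
    intro x _
    apply Finset.sum_nonneg
    intro y _
    exact Complex.normSq_nonneg _
  have hncard : (0:ℝ) ≤ ((bdry Ω).ncard : ℝ) := Nat.cast_nonneg _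
  have hconst : c1 * ((B * Bᴴ).trace).re ≤ 8 * d ^ 2 / (U * δ) * (bdry Ω).ncard := by
    have h1 : c1 * ((B * Bᴴ).trace).re ≤ c1 * (2 * (d:ℝ) * (bdry Ω).ncard) :=
      mul_le_mul_of_nonneg_left htrB (le_of_lt hc1pos)
    apply le_trans h1
    rw [hc1, hg]
    have hd1 : (1:ℝ) ≤ (d:ℝ) := by exact_mod_cast hd
    have h3 : (U*δ/2)⁻¹ * (2*(d:ℝ)) ≤ 8*(d:ℝ)^2/(U*δ) := by
      rw [inv_div, div_mul_eq_mul_div, div_le_div_iff₀ (by positivity) (by positivity)]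
      have hdd : (d:ℝ) ≤ (d:ℝ)^2 := by nlinarith
      nlinarith [mul_le_mul_of_nonneg_right hdd (le_of_lt (mul_pos hU hδpos))]
    calc (U*δ/2)⁻¹ * (2*(d:ℝ) * (bdry Ω).ncard) = ((U*δ/2)⁻¹ * (2*(d:ℝ))) * (bdry Ω).ncard := by
          ring
      _ ≤ (8*(d:ℝ)^2/(U*δ)) * (bdry Ω).ncard := mul_le_mul_of_nonneg_right h3 hncard
  linarith [step1, step2, step3, hconst]
end
end

section
/- Let μ > 0, U > 0, δ ≥ 2μ/U, let Ω ⊆ Λ, and let ρ̃ : Λ → ℝ be a nonnegative function with ρ̃(x) ≥ δ for all x ∈ Λ∖Ω, viewed as a diagonal matrix. Set H := -Δ - μ·Id + U·ρ̃. Then for every e ≥ 0 the block P_Ω^⊥(H + e·Id)P_Ω^⊥ is positive definite (hence invertible) on the range of P_Ω^⊥, and for every λ > 0 the number of eigenvalues of H strictly below -λ (counted with multiplicity) is at most the number of strictly negative eigenvalues (counted with multiplicity) of the Feshbach matrix F(λ) + λ·P_Ω restricted to the range of P_Ω, where F(e) := P_Ω H P_Ω - P_Ω Δ P_Ω^⊥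 [P_Ω^⊥(H + e·Id)P_Ω^⊥]^{-1} P_Ω^⊥ Δ P_Ω and the inverse is taken on the range of P_Ω^⊥. -/
open Matrix
open scoped BigOperators Classical ComplexOrder

noncomputable section

/-- The number of eigenvalues (with multiplicity) of a hermitian matrix `X` strictly
below `t` (junk value `0` if `X` is not hermitian). -/
def negCount {n : Type} [Fintype n] [DecidableEq n] (X : Matrix n n ℂ) (t : ℝ) : ℕ :=
  if hX : X.IsHermitian then (Finset.univ.filter fun i => hX.eigenvalues i < t).card else 0

/-- The compression of a `Λ×Λ` matrix to the block `A×B`. -/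
def blk {d L : ℕ} (A B : Set (Lam d L)) (X : Matrix (Lam d L) (Lam d L) ℂ) :
    Matrix A B ℂ :=
  X.submatrix Subtype.val Subtype.val

set_option linter.unusedSectionVars false
set_option maxHeartbeats 1000000

namespace Fesh

variable {n : Type} [Fintype n] [DecidableEq n]

def qf (M : Matrix n n ℂ) (v : n → ℂ) : ℝ := (star v ⬝ᵥ (M *ᵥ v)).re
def nsq (v : n → ℂ) : ℝ := ∑ i, Complex.normSq (v i)

lemma star_dot_self (v : n → ℂ) : star v ⬝ᵥ v = (nsq v : ℂ) := by
  simp only [dotProduct, Pi.star_apply, nsq]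
  push_cast
  exact Finset.sum_congr rfl fun i _ => (Complex.normSq_eq_conj_mul_self).symm

lemma nsq_pos {v : n → ℂ} (hv : v ≠ 0) : 0 < nsq v := by
  obtain ⟨i, hi⟩ := Function.ne_iff.mp hv
  exact Finset.sum_pos' (fun j _ => Complex.normSq_nonneg _)
    ⟨i, Finset.mem_univ i, Complex.normSq_pos.mpr hi⟩

lemma qf_smul_one_add (M : Matrix n n ℂ) (c : ℝ) (v : n → ℂ) :
    qf (M + (c : ℂ) • 1) v = qf M v + c * nsq v := by
  simp only [qf, add_mulVec, smul_mulVec, one_mulVec, dotProduct_add, dotProduct_smul,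
    star_dot_self, Complex.add_re, smul_eq_mul, ← Complex.ofReal_mul, Complex.ofReal_re]

section eig
variable {M : Matrix n n ℂ} (hM : M.IsHermitian)

lemma UhU : (star (hM.eigenvectorUnitary : Matrix n n ℂ)) * (hM.eigenvectorUnitary : Matrix n n ℂ) = 1 :=
  mem_unitaryGroup_iff'.mp hM.eigenvectorUnitary.2

lemma UUh : (hM.eigenvectorUnitary : Matrix n n ℂ) * (star (hM.eigenvectorUnitary : Matrix n n ℂ)) = 1 :=
  mem_unitaryGroup_iff.mp hM.eigenvectorUnitary.2

lemma coord_eq (w : n → ℂ) :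
    (star (hM.eigenvectorUnitary : Matrix n n ℂ)) *ᵥ ((hM.eigenvectorUnitary : Matrix n n ℂ) *ᵥ w) = w := by
  rw [mulVec_mulVec, UhU hM, one_mulVec]

lemma nsq_coord (v : n → ℂ) :
    nsq v = nsq ((star (hM.eigenvectorUnitary : Matrix n n ℂ)) *ᵥ v) := by
  set U := (hM.eigenvectorUnitary : Matrix n n ℂ)
  set w := (star U) *ᵥ v with hw
  have hv : v = U *ᵥ w := by rw [hw, mulVec_mulVec, UUh hM, one_mulVec]
  have : (nsq v : ℂ) = (nsq w : ℂ) := by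
    rw [← star_dot_self, ← star_dot_self, hv, star_mulVec, dotProduct_mulVec, vecMul_vecMul]
    rw [show Uᴴ * U = 1 from by rw [← star_eq_conjTranspose]; exact UhU hM, vecMul_one]
  exact_mod_cast this

lemma qf_eigen (v : n → ℂ) :
    qf M v = ∑ i, hM.eigenvalues i *
      Complex.normSq (((star (hM.eigenvectorUnitary : Matrix n n ℂ)) *ᵥ v) i) := by
  set U := (hM.eigenvectorUnitary : Matrix n n ℂ)
  set w := (star U) *ᵥ v with hw
  have key : star v ⬝ᵥ (M *ᵥ v) = star w ⬝ᵥ ((diagonal (RCLike.ofReal ∘ hM.eigenvalues)) *ᵥ w) := by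
    conv_lhs => rw [hM.spectral_theorem, Unitary.conjStarAlgAut_apply]
    rw [← mulVec_mulVec, ← mulVec_mulVec, dotProduct_mulVec (star v)]
    congr 1
    rw [hw, star_mulVec, star_eq_conjTranspose, conjTranspose_conjTranspose]
  rw [qf, key]
  rw [dotProduct, Complex.re_sum]
  refine Finset.sum_congr rfl fun i _ => ?_
  rw [mulVec_diagonal]
  simp only [Pi.star_apply, Function.comp_apply]
  have h1 : (RCLike.ofReal (hM.eigenvalues i) : ℂ) = ((hM.eigenvalues i : ℝ) : ℂ) := rfl
  rw [h1, Complex.star_def, show (starRingEnd ℂ) (w i) * (((hM.eigenvalues i : ℝ):ℂ) * w i)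
      = ((hM.eigenvalues i : ℝ):ℂ) * ((starRingEnd ℂ) (w i) * w i) by ring,
    ← Complex.normSq_eq_conj_mul_self, ← Complex.ofReal_mul, Complex.ofReal_re]

end eig

/-- The subspace of vectors supported on `S`. -/
def extMap (S : Finset n) : ({x // x ∈ S} → ℂ) →ₗ[ℂ] (n → ℂ) where
  toFun f := fun i => if h : i ∈ S then f ⟨i, h⟩ else 0
  map_add' f g := by funext i; by_cases h : i ∈ S <;> simp [h]
  map_smul' c f := by funext i; by_cases h : i ∈ S <;> simp [h]

lemma extMap_injective (S : Finset n) : Function.Injective (extMap S) := by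
  intro f g h
  funext i
  have := congrFun h i.1
  simpa [extMap, i.2] using this

def coordSub (S : Finset n) : Submodule ℂ (n → ℂ) := LinearMap.range (extMap S)

lemma mem_coordSub {S : Finset n} {w : n → ℂ} :
    w ∈ coordSub S ↔ ∀ i, i ∉ S → w i = 0 := by
  constructor
  · rintro ⟨f, rfl⟩ i hi
    simp [extMap, hi]
  · intro h
    exact ⟨fun i => w i.1, by funext i; by_cases hi : i ∈ S <;> simp [extMap, hi, h i]⟩

lemma finrank_coordSub (S : Finset n) : Module.finrank ℂ (coordSub S) = S.card := by
  rw [coordSub, LinearMap.finrank_range_of_inj (extMap_injective S),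
    Module.finrank_pi, Fintype.card_coe]


section count
variable {M : Matrix n n ℂ}

def Efun (hM : M.IsHermitian) : (n → ℂ) ≃ₗ[ℂ] (n → ℂ) :=
  LinearEquiv.ofLinear (mulVecLin (hM.eigenvectorUnitary : Matrix n n ℂ))
    (mulVecLin (star (hM.eigenvectorUnitary : Matrix n n ℂ)))
    (by rw [← mulVecLin_mul, UUh hM, mulVecLin_one])
    (by rw [← mulVecLin_mul, UhU hM, mulVecLin_one])

lemma Efun_apply (hM : M.IsHermitian) (w : n → ℂ) : Efun hM w = (hM.eigenvectorUnitary : Matrix n n ℂ) *ᵥ w := rfl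

lemma negCount_eq (hM : M.IsHermitian) (t : ℝ) : negCount M t = (Finset.univ.filter fun i => hM.eigenvalues i < t).card := by
  rw [negCount, dif_pos hM]

lemma exists_neg_subspace (hM : M.IsHermitian) (t : ℝ) :
    ∃ W : Submodule ℂ (n → ℂ), Module.finrank ℂ W = negCount M t ∧
      ∀ v ∈ W, v ≠ 0 → qf M v < t * nsq v := by
  set S := (Finset.univ.filter fun i => hM.eigenvalues i < t) with hS
  refine ⟨(coordSub S).map ((Efun hM : (n → ℂ) ≃ₗ[ℂ] (n → ℂ)) : (n → ℂ) →ₗ[ℂ] (n → ℂ)), ?_, ?_⟩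
  · rw [LinearEquiv.finrank_map_eq, finrank_coordSub, negCount_eq hM]
  · intro v hv hv0
    obtain ⟨w, hw, rfl⟩ := Submodule.mem_map.mp hv
    have hw0 : w ≠ 0 := by rintro rfl; exact hv0 (map_zero _)
    have hww : (star (hM.eigenvectorUnitary : Matrix n n ℂ)) *ᵥ
        (((Efun hM : (n → ℂ) ≃ₗ[ℂ] (n → ℂ)) : (n → ℂ) →ₗ[ℂ] (n → ℂ)) w) = w := by
      rw [show (((Efun hM : (n → ℂ) ≃ₗ[ℂ] (n → ℂ)) : (n → ℂ) →ₗ[ℂ] (n → ℂ)) w)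
          = (hM.eigenvectorUnitary : Matrix n n ℂ) *ᵥ w from rfl]
      exact coord_eq hM w
    rw [qf_eigen hM, nsq_coord hM, hww, nsq, Finset.mul_sum]
    apply Finset.sum_lt_sum
    · intro i _
      by_cases hwi : w i = 0
      · simp [hwi]
      · have hiS : i ∈ S := by
          by_contra hiS
          exact hwi (mem_coordSub.mp hw i hiS)
        have : hM.eigenvalues i < t := (Finset.mem_filter.mp hiS).2
        exact mul_le_mul_of_nonneg_right this.le (Complex.normSq_nonneg _)
    · obtain ⟨i, hi⟩ := Function.ne_iff.mp hw0
      refine ⟨i, Finset.mem_univ i, ?_⟩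
      have hiS : i ∈ S := by
        by_contra hiS
        exact hi (mem_coordSub.mp hw i hiS)
      exact mul_lt_mul_of_pos_right (Finset.mem_filter.mp hiS).2 (Complex.normSq_pos.mpr hi)

lemma finrank_le_negCount (hM : M.IsHermitian) (t : ℝ) (W : Submodule ℂ (n → ℂ))
    (hW : ∀ v ∈ W, v ≠ 0 → qf M v < t * nsq v) :
    Module.finrank ℂ W ≤ negCount M t := by
  by_contra hlt
  push_neg at hlt
  set S := (Finset.univ.filter fun i => hM.eigenvalues i < t) with hS
  have hcount : negCount M t = S.card := negCount_eq hM t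
  set P := (coordSub Sᶜ).map ((Efun hM : (n → ℂ) ≃ₗ[ℂ] (n → ℂ)) : (n → ℂ) →ₗ[ℂ] (n → ℂ)) with hP
  have hPrank : Module.finrank ℂ P = Fintype.card n - S.card := by
    rw [hP, LinearEquiv.finrank_map_eq, finrank_coordSub, Finset.card_compl]
  have hqP : ∀ v ∈ P, t * nsq v ≤ qf M v := by
    intro v hv
    obtain ⟨w, hw, rfl⟩ := Submodule.mem_map.mp hv
    have hww : (star (hM.eigenvectorUnitary : Matrix n n ℂ)) *ᵥ
        (((Efun hM : (n → ℂ) ≃ₗ[ℂ] (n → ℂ)) : (n → ℂ) →ₗ[ℂ] (n → ℂ)) w) = w := coord_eq hM w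
    rw [qf_eigen hM, nsq_coord hM, hww, nsq, Finset.mul_sum]
    apply Finset.sum_le_sum
    intro i _
    by_cases hwi : w i = 0
    · simp [hwi]
    · have hiS : i ∈ Sᶜ := by
        by_contra hiS
        exact hwi (mem_coordSub.mp hw i hiS)
      have : ¬ hM.eigenvalues i < t := by
        intro hc
        exact (Finset.mem_compl.mp hiS) (Finset.mem_filter.mpr ⟨Finset.mem_univ i, hc⟩)
      exact mul_le_mul_of_nonneg_right (not_lt.mp this) (Complex.normSq_nonneg _)
  have h1 : Module.finrank ℂ ↥(W ⊔ P) + Module.finrank ℂ ↥(W ⊓ P)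
      = Module.finrank ℂ ↥W + Module.finrank ℂ ↥P :=
    Submodule.finrank_sup_add_finrank_inf_eq W P
  have h2 : Module.finrank ℂ ↥(W ⊔ P) ≤ Fintype.card n := by
    have := Submodule.finrank_le (W ⊔ P)
    rwa [Module.finrank_pi] at this
  have hScard : S.card ≤ Fintype.card n := by
    rw [← Finset.card_univ]; exact Finset.card_le_card (Finset.subset_univ S)
  have hpos : 0 < Module.finrank ℂ ↥(W ⊓ P) := by omega
  have hnb : (W ⊓ P) ≠ ⊥ := by
    intro h
    rw [h, finrank_bot] at hpos
    exact lt_irrefl 0 hpos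
  obtain ⟨v, hv, hv0⟩ := Submodule.exists_mem_ne_zero_of_ne_bot hnb
  have := hW v (Submodule.mem_inf.mp hv).1 hv0
  have := hqP v (Submodule.mem_inf.mp hv).2
  linarith

end count

variable {d L : ℕ}

lemma isNN_comm {x y : Lam d L} : isNN x y ↔ isNN y x := by
  constructor <;>
  · rintro ⟨ν, h1 | h1, h2⟩
    · exact ⟨ν, Or.inr h1.symm, fun μ hμ => (h2 μ hμ).symm⟩
    · exact ⟨ν, Or.inl h1.symm, fun μ hμ => (h2 μ hμ).symm⟩

lemma card_NN_le [NeZero L] (hd : 1 ≤ d) (x : Lam d L) :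
    ((Finset.univ.filter fun y => isNN x y).card) ≤ 2 * d := by
  have hcard : ((Finset.univ : Finset (Fin d × Bool))).card = 2 * d := by
    simp [Finset.card_univ, Fintype.card_prod, mul_comm]
  rw [← hcard]
  apply Finset.card_le_card_of_injOn
    (fun y => if h : isNN x y then (h.choose, decide (x h.choose = y h.choose + 1)) else (⟨0, hd⟩, false))
  · intro y _; exact Finset.mem_univ _
  · intro y1 hy1 y2 hy2 heq
    have h1 : isNN x y1 := (Finset.mem_filter.mp (Finset.mem_coe.mp hy1)).2
    have h2 : isNN x y2 := (Finset.mem_filter.mp (Finset.mem_coe.mp hy2)).2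
    simp only [dif_pos h1, dif_pos h2] at heq
    have hν : h1.choose = h2.choose := (Prod.ext_iff.mp heq).1
    have hb := (Prod.ext_iff.mp heq).2
    obtain ⟨hor1, hco1⟩ := h1.choose_spec
    obtain ⟨hor2, hco2⟩ := h2.choose_spec
    rw [← hν] at hb hor2 hco2
    funext μ
    by_cases hμ : μ = h1.choose
    · have hiff := decide_eq_decide.mp hb
      have hkey : y1 h1.choose = y2 h1.choose := by
        by_cases hp : x h1.choose = y1 h1.choose + 1
        · exact add_right_cancel (hp.symm.trans (hiff.mp hp))
        · exact (hor1.resolve_left hp).symm.trans (hor2.resolve_left (fun hq => hp (hiff.mpr hq)))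
      rw [hμ]
      exact hkey
    · exact (hco1 μ hμ).symm.trans (hco2 μ hμ)


lemma lap_apply (x y : Lam d L) :
    lap d L x y = (if isNN x y then (1:ℂ) else 0) - (2 * (d:ℂ)) * (if x = y then 1 else 0) := by
  simp [lap, Matrix.sub_apply, Matrix.smul_apply, one_apply, of_apply, smul_eq_mul]

lemma lap_herm : (lap d L).IsHermitian := by
  rw [IsHermitian]
  ext i j
  rw [conjTranspose_apply, lap_apply, lap_apply]
  by_cases h1 : isNN i j <;> by_cases h2 : i = j <;>
    simp [h1, h2, show isNN j i ↔ isNN i j from isNN_comm, eq_comm, star_sub, star_mul',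
      Complex.star_def, _root_.map_one, _root_.map_zero, _root_.map_mul, Complex.conj_natCast]

lemma smul_one_herm (c : ℝ) : ((c:ℂ) • (1 : Matrix (Lam d L) (Lam d L) ℂ)).IsHermitian := by
  rw [IsHermitian, conjTranspose_smul, conjTranspose_one, Complex.star_def, Complex.conj_ofReal]

lemma H_herm [NeZero L] (μ U : ℝ) (ρt : Lam d L → ℝ) (H : Matrix (Lam d L) (Lam d L) ℂ)
    (hH : H = -(lap d L) - (μ : ℂ) • 1 + Matrix.diagonal (fun x => (U * ρt x : ℂ))) :
    H.IsHermitian := by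
  subst hH
  refine IsHermitian.add (IsHermitian.sub lap_herm.neg (smul_one_herm μ)) ?_
  rw [IsHermitian, diagonal_conjTranspose]
  have : star (fun x => (U * ρt x : ℂ)) = (fun x => (U * ρt x : ℂ)) := by
    funext x
    simp [Pi.star_apply, Complex.star_def, _root_.map_mul, Complex.conj_ofReal]
  rw [this]

lemma herm_dot_eq_re {n : Type} [Fintype n] {X : Matrix n n ℂ} (hX : X.IsHermitian) (v : n → ℂ) :
    star v ⬝ᵥ (X *ᵥ v) = ((qf X v : ℝ) : ℂ) := by
  have hst : star (star v ⬝ᵥ (X *ᵥ v)) = star v ⬝ᵥ (X *ᵥ v) := by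
    have h1 : star (X *ᵥ v) ⬝ᵥ star (star v) = star (star v ⬝ᵥ (X *ᵥ v)) :=
      star_dotProduct_star _ _
    rw [← h1, star_star, star_mulVec, hX.eq, ← dotProduct_mulVec]
  rw [Complex.star_def] at hst
  exact (Complex.conj_eq_iff_re.mp hst).symm

lemma qf_diagonal {n : Type} [Fintype n] [DecidableEq n] (c : n → ℝ) (v : n → ℂ) :
    qf (Matrix.diagonal fun i => (c i : ℂ)) v = ∑ i, c i * Complex.normSq (v i) := by
  rw [qf, dotProduct, Complex.re_sum]
  refine Finset.sum_congr rfl fun i _ => ?_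
  rw [mulVec_diagonal]
  simp only [Pi.star_apply, Complex.star_def]
  rw [show (starRingEnd ℂ) (v i) * (((c i : ℝ):ℂ) * v i)
      = ((c i : ℝ):ℂ) * ((starRingEnd ℂ) (v i) * v i) by ring,
    ← Complex.normSq_eq_conj_mul_self, ← Complex.ofReal_mul, Complex.ofReal_re]

lemma qf_sub {n : Type} [Fintype n] (M N : Matrix n n ℂ) (v : n → ℂ) :
    qf (M - N) v = qf M v - qf N v := by
  simp [qf, sub_mulVec, dotProduct_sub, Complex.sub_re]


/-- Key positivity bound for the off-`Ω` block. -/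
lemma re_conj_mul_le (z w : ℂ) :
    ((starRingEnd ℂ) z * w).re ≤ (Complex.normSq z + Complex.normSq w)/2 := by
  simp only [Complex.mul_re, Complex.conj_re, Complex.conj_im, Complex.normSq_apply]
  nlinarith [sq_nonneg (z.re - w.re), sq_nonneg (z.im - w.im)]

lemma row_sum_le [NeZero L] {ι : Type} [Fintype ι] (hd : 1 ≤ d) (f : ι → Lam d L)
    (hf : Function.Injective f) (a : Lam d L) :
    ∑ j : ι, (if isNN a (f j) then (1:ℝ) else 0) ≤ 2*(d:ℝ) := by
  rw [Finset.sum_boole]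
  have h1 : (Finset.univ.filter fun j : ι => isNN a (f j)).card
      ≤ (Finset.univ.filter fun y => isNN a y).card := by
    apply Finset.card_le_card_of_injOn f
    · intro j hj
      exact Finset.mem_filter.mpr ⟨Finset.mem_univ _, (Finset.mem_filter.mp hj).2⟩
    · exact fun a _ b _ h => hf h
  have h2 := card_NN_le hd a
  have h3 : ((Finset.univ.filter fun j : ι => isNN a (f j)).card : ℝ) ≤ ((2*d : ℕ) : ℝ) :=
    Nat.cast_le.mpr (le_trans h1 h2)
  push_cast at h3
  convert h3 using 2

lemma blk_posdef [NeZero L] (hd : 1 ≤ d) (μ U δ : ℝ) (hμ : 0 < μ) (hU : 0 < U)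
    (hδ : 2 * μ / U ≤ δ) (Ω : Set (Lam d L)) (ρt : Lam d L → ℝ)
    (hρδ : ∀ x, x ∉ Ω → δ ≤ ρt x)
    (H : Matrix (Lam d L) (Lam d L) ℂ)
    (hH : H = -(lap d L) - (μ : ℂ) • 1 + Matrix.diagonal (fun x => (U * ρt x : ℂ)))
    (e : ℝ) (he : 0 ≤ e) :
    (blk Ωᶜ Ωᶜ (H + (e : ℂ) • 1)).PosDef := by
  have hHh : H.IsHermitian := H_herm μ U ρt H hH
  have hherm : (blk Ωᶜ Ωᶜ (H + (e : ℂ) • 1)).IsHermitian :=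
    (hHh.add (smul_one_herm e)).submatrix _
  set c : ↥(Ωᶜ) → ℝ := fun i => 2*(d:ℝ) - μ + U * ρt i.1 + e with hc
  set Tm : Matrix ↥(Ωᶜ) ↥(Ωᶜ) ℂ :=
    Matrix.of (fun i j => if isNN i.1 j.1 then (1:ℂ) else 0) with hTm
  have hsplit : blk Ωᶜ Ωᶜ (H + (e : ℂ) • 1) = Matrix.diagonal (fun i => (c i : ℂ)) - Tm := by
    ext i j
    subst hH
    simp only [blk, submatrix_apply, Matrix.add_apply, Matrix.sub_apply, Matrix.neg_apply, Matrix.smul_apply,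
      one_apply, diagonal_apply, lap_apply, hTm, of_apply, smul_eq_mul]
    by_cases h : i = j
    · subst h
      simp only [if_pos rfl, Subtype.val_inj.mpr rfl]
      push_cast [hc]
      ring
    · have hv : (i : Lam d L) ≠ (j : Lam d L) := fun hh => h (Subtype.ext hh)
      simp [h, hv]
  refine PosDef.of_dotProduct_mulVec_pos hherm fun x hx => ?_
  rw [herm_dot_eq_re hherm x]
  rw [Complex.zero_lt_real]
  rw [hsplit, qf_sub, qf_diagonal]
  -- bound qf Tm x
  have hTb : qf Tm x ≤ ∑ i, (2*(d:ℝ)) * Complex.normSq (x i) := by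
    have hq : qf Tm x = ∑ i, ∑ j, (if isNN i.1 j.1 then ((starRingEnd ℂ) (x i) * x j).re else 0) := by
      rw [qf, dotProduct, Complex.re_sum]
      refine Finset.sum_congr rfl fun i _ => ?_
      rw [mulVec, dotProduct, Finset.mul_sum, Complex.re_sum]
      refine Finset.sum_congr rfl fun j _ => ?_
      simp only [Pi.star_apply, Complex.star_def, hTm, of_apply]
      by_cases hnn : isNN i.1 j.1 <;> simp [hnn]
    rw [hq]
    have step1 : ∀ i j : ↥(Ωᶜ), (if isNN i.1 j.1 then ((starRingEnd ℂ) (x i) * x j).re else 0)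
        ≤ (if isNN i.1 j.1 then (1:ℝ) else 0) * ((Complex.normSq (x i) + Complex.normSq (x j))/2) := by
      intro i j
      by_cases hnn : isNN i.1 j.1
      · simp only [hnn, if_true, one_mul]
        exact re_conj_mul_le _ _
      · simp [hnn]
    set b : ↥(Ωᶜ) → ↥(Ωᶜ) → ℝ := fun i j => if isNN i.1 j.1 then (1:ℝ) else 0 with hb
    set N : ↥(Ωᶜ) → ℝ := fun i => Complex.normSq (x i) with hN
    calc (∑ i, ∑ j, (if isNN i.1 j.1 then ((starRingEnd ℂ) (x i) * x j).re else 0))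
        ≤ ∑ i, ∑ j, b i j * ((N i + N j)/2) := by
          exact Finset.sum_le_sum fun i _ => Finset.sum_le_sum fun j _ => step1 i j
      _ = (∑ i, ∑ j, b i j * N i / 2) + (∑ i, ∑ j, b i j * N j / 2) := by
          rw [← Finset.sum_add_distrib]
          refine Finset.sum_congr rfl fun i _ => ?_
          rw [← Finset.sum_add_distrib]
          exact Finset.sum_congr rfl fun j _ => by ring
      _ = (∑ i, ∑ j, b i j * N i / 2) + (∑ i, ∑ j, b i j * N i / 2) := by
          congr 1
          rw [Finset.sum_comm]
          refine Finset.sum_congr rfl fun i _ => Finset.sum_congr rfl fun j _ => ?_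
          rw [hb]
          simp only
          rw [show (isNN (j.1 : Lam d L) i.1 ↔ isNN (i.1 : Lam d L) j.1) from isNN_comm]
      _ = ∑ i, (∑ j, b i j) * N i := by
          rw [← Finset.sum_add_distrib]
          refine Finset.sum_congr rfl fun i _ => ?_
          rw [Finset.sum_mul]
          rw [← Finset.sum_add_distrib]
          exact Finset.sum_congr rfl fun j _ => by ring
      _ ≤ ∑ i, (2*(d:ℝ)) * N i := by
          refine Finset.sum_le_sum fun i _ => ?_
          exact mul_le_mul_of_nonneg_right (row_sum_le hd (fun j : ↥(Ωᶜ) => j.1) (fun a b h => Subtype.ext h) i.1) (Complex.normSq_nonneg _)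
      _ = ∑ i, (2*(d:ℝ)) * Complex.normSq (x i) := rfl
  -- final positivity
  have hbound : ∀ i : ↥(Ωᶜ), μ * Complex.normSq (x i) ≤ (c i - 2*(d:ℝ)) * Complex.normSq (x i) := by
    intro i
    apply mul_le_mul_of_nonneg_right _ (Complex.normSq_nonneg _)
    have hρ : δ ≤ ρt i.1 := hρδ _ (Set.mem_compl_iff Ω i.1 |>.mp i.2)
    have hUδ : 2*μ ≤ δ * U := (div_le_iff₀ hU).mp hδ
    have hUρ : U * δ ≤ U * ρt i.1 := mul_le_mul_of_nonneg_left hρ hU.le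
    rw [hc]
    simp only
    nlinarith
  have hsum1 : ∑ i, μ * Complex.normSq (x i) ≤ ∑ i, (c i - 2*(d:ℝ)) * Complex.normSq (x i) :=
    Finset.sum_le_sum fun i _ => hbound i
  have hμn : 0 < μ * nsq x := mul_pos hμ (nsq_pos hx)
  have hnsq : ∑ i, μ * Complex.normSq (x i) = μ * nsq x := by rw [nsq, Finset.mul_sum]
  have hsplit2 : ∑ i, (c i - 2*(d:ℝ)) * Complex.normSq (x i)
      = ∑ i, c i * Complex.normSq (x i) - ∑ i, (2*(d:ℝ)) * Complex.normSq (x i) := by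
    rw [← Finset.sum_sub_distrib]
    exact Finset.sum_congr rfl fun i _ => by ring
  linarith

section glue
variable {d L : ℕ} [NeZero L]

lemma blocks_eq (X : Matrix (Lam d L) (Lam d L) ℂ) (Ω : Set (Lam d L)) :
    Matrix.fromBlocks (blk Ω Ω X) (blk Ω Ωᶜ X) (blk Ωᶜ Ω X) (blk Ωᶜ Ωᶜ X)
      = X.submatrix (Equiv.Set.sumCompl Ω) (Equiv.Set.sumCompl Ω) := by
  ext i j
  cases i <;> cases j <;>
    simp [blk, Matrix.submatrix_apply, Equiv.Set.sumCompl_apply_inl, Equiv.Set.sumCompl_apply_inr]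

lemma qf_reindex {m n : Type} [Fintype m] [Fintype n] (X : Matrix n n ℂ) (e : m ≃ n)
    (v : n → ℂ) :
    star v ⬝ᵥ (X *ᵥ v) = star (v ∘ e) ⬝ᵥ ((X.submatrix e e) *ᵥ (v ∘ e)) := by
  rw [submatrix_mulVec_equiv]
  rw [show (v ∘ ⇑e) ∘ ⇑e.symm = v from by funext x; simp]
  rw [dotProduct, dotProduct]
  exact (Fintype.sum_equiv e _ _ (fun s => rfl)).symm

lemma blk_conjT (A B : Set (Lam d L)) (X : Matrix (Lam d L) (Lam d L) ℂ)
    (hX : X.IsHermitian) : (blk A B X)ᴴ = blk B A X := by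
  unfold blk
  rw [conjTranspose_submatrix, hX.eq]

/-- The Schur-complement decomposition of the quadratic form. -/
lemma schur_key (Ω : Set (Lam d L)) (M : Matrix (Lam d L) (Lam d L) ℂ)
    (hM : M.IsHermitian) [Invertible (blk Ωᶜ Ωᶜ M)] (v : Lam d L → ℂ) :
    star v ⬝ᵥ (M *ᵥ v) =
      (star ((((blk Ωᶜ Ωᶜ M)⁻¹ * (blk Ω Ωᶜ M)ᴴ) *ᵥ (v ∘ (Subtype.val : ↥Ω → Lam d L))
          + (v ∘ (Subtype.val : ↥(Ωᶜ) → Lam d L)))) ᵥ* (blk Ωᶜ Ωᶜ M)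
        ⬝ᵥ (((blk Ωᶜ Ωᶜ M)⁻¹ * (blk Ω Ωᶜ M)ᴴ) *ᵥ (v ∘ (Subtype.val : ↥Ω → Lam d L))
          + (v ∘ (Subtype.val : ↥(Ωᶜ) → Lam d L))))
      + (star (v ∘ (Subtype.val : ↥Ω → Lam d L)))
          ᵥ* (blk Ω Ω M - blk Ω Ωᶜ M * (blk Ωᶜ Ωᶜ M)⁻¹ * (blk Ω Ωᶜ M)ᴴ)
          ⬝ᵥ (v ∘ (Subtype.val : ↥Ω → Lam d L)) := by
  have hD : (blk Ωᶜ Ωᶜ M).IsHermitian := hM.submatrix _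
  have hC : blk Ωᶜ Ω M = (blk Ω Ωᶜ M)ᴴ := (blk_conjT Ω Ωᶜ M hM).symm
  have hveq : v ∘ (Equiv.Set.sumCompl Ω)
      = Sum.elim (v ∘ (Subtype.val : ↥Ω → Lam d L)) (v ∘ (Subtype.val : ↥(Ωᶜ) → Lam d L)) := by
    funext s
    cases s <;> simp [Equiv.Set.sumCompl_apply_inl, Equiv.Set.sumCompl_apply_inr]
  rw [qf_reindex M (Equiv.Set.sumCompl Ω) v, ← blocks_eq, hveq, hC, dotProduct_mulVec]
  exact schur_complement_eq₂₂ (blk Ω Ω M) (blk Ω Ωᶜ M) _ _ hD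

end glue

end Fesh


/-- Feshbach eigenvalue counting, Lemma 3.2's proof: with
`H = -Δ - μ + Uρ̃`, `ρ̃ ≥ δ ≥ 2μ/U` off `Ω`, the block `P_Ω^⊥(H+e)P_Ω^⊥` is positive
definite for `e ≥ 0`, and the number of eigenvalues of `H` below `-λ` is at most the
number of negative eigenvalues of the Feshbach matrix `F(λ) + λ` on `Ω`. -/
theorem feshbach_eigenvalue_counting (d L : ℕ) (hd : 1 ≤ d) [NeZero L]
    (hLeven : Even L) (hL2 : 2 ≤ L) (μ U δ : ℝ) (hμ : 0 < μ) (hU : 0 < U)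
    (hδ : 2 * μ / U ≤ δ)
    (Ω : Set (Lam d L)) (ρt : Lam d L → ℝ) (hρ0 : ∀ x, 0 ≤ ρt x)
    (hρδ : ∀ x, x ∉ Ω → δ ≤ ρt x)
    (H : Matrix (Lam d L) (Lam d L) ℂ)
    (hH : H = -(lap d L) - (μ : ℂ) • 1 + Matrix.diagonal (fun x => (U * ρt x : ℂ))) :
    (∀ e : ℝ, 0 ≤ e → (blk Ωᶜ Ωᶜ (H + (e : ℂ) • 1)).PosDef) ∧
    (∀ lam : ℝ, 0 < lam →
      negCount H (-lam) ≤
        negCount (blk Ω Ω H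
            - blk Ω Ωᶜ (lap d L) * (blk Ωᶜ Ωᶜ (H + (lam : ℂ) • 1))⁻¹
                * blk Ωᶜ Ω (lap d L)
            + (lam : ℂ) • 1) 0) := by
  have hHh : H.IsHermitian := Fesh.H_herm μ U ρt H hH
  constructor
  · intro e he
    exact Fesh.blk_posdef hd μ U δ hμ hU hδ Ω ρt hρδ H hH e he
  · intro lam hlam
    have hDpd : (blk Ωᶜ Ωᶜ (H + (lam : ℂ) • 1)).PosDef :=
      Fesh.blk_posdef hd μ U δ hμ hU hδ Ω ρt hρδ H hH lam hlam.le
    set M := H + (lam : ℂ) • 1 with hMdef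
    have hMh : M.IsHermitian := hHh.add (Fesh.smul_one_herm lam)
    have hDh : (blk Ωᶜ Ωᶜ M).IsHermitian := hMh.submatrix _
    haveI : Invertible (blk Ωᶜ Ωᶜ M) := invertibleOfIsUnitDet _ hDpd.det_pos.ne'.isUnit
    -- the Feshbach matrix
    set St := blk Ω Ω H - blk Ω Ωᶜ (lap d L) * (blk Ωᶜ Ωᶜ M)⁻¹ * blk Ωᶜ Ω (lap d L)
        + (lam : ℂ) • 1 with hStdef
    have hne : ∀ (i : ↥Ω) (j : ↥(Ωᶜ)), (i : Lam d L) ≠ (j : Lam d L) := by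
      intro i j hij
      exact j.2 (hij ▸ i.2)
    have hB : blk Ω Ωᶜ M = -(blk Ω Ωᶜ (lap d L)) := by
      ext i j
      have h := hne i j
      simp [blk, hMdef, hH, Matrix.add_apply, Matrix.sub_apply, Matrix.neg_apply,
        Matrix.smul_apply, Matrix.one_apply_ne h, Matrix.diagonal_apply_ne _ h]
    have hBh : (blk Ω Ωᶜ M)ᴴ = -(blk Ωᶜ Ω (lap d L)) := by
      rw [Fesh.blk_conjT Ω Ωᶜ M hMh]
      ext j i
      have h := hne i j
      have h' : (j : Lam d L) ≠ (i : Lam d L) := fun hh => h hh.symm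
      simp [blk, hMdef, hH, Matrix.add_apply, Matrix.sub_apply, Matrix.neg_apply,
        Matrix.smul_apply, Matrix.one_apply_ne h', Matrix.diagonal_apply_ne _ h']
    have hA : blk Ω Ω M = blk Ω Ω H + (lam : ℂ) • (1 : Matrix ↥Ω ↥Ω ℂ) := by
      ext i j
      by_cases h : i = j
      · subst h
        simp [blk, hMdef, Matrix.add_apply, Matrix.smul_apply, Matrix.one_apply]
      · have hv : (i : Lam d L) ≠ (j : Lam d L) := fun hh => h (Subtype.ext hh)
        simp [blk, hMdef, Matrix.add_apply, Matrix.smul_apply, Matrix.one_apply_ne h,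
          Matrix.one_apply_ne hv]
    have hSt : St = blk Ω Ω M - blk Ω Ωᶜ M * (blk Ωᶜ Ωᶜ M)⁻¹ * (blk Ω Ωᶜ M)ᴴ := by
      rw [hStdef, hA, hBh, hB]
      simp only [Matrix.neg_mul, Matrix.mul_neg, neg_neg]
      abel
    have hSth : St.IsHermitian := by
      rw [hSt]
      refine IsHermitian.sub (hMh.submatrix _) ?_
      rw [IsHermitian, conjTranspose_mul, conjTranspose_mul, conjTranspose_conjTranspose,
        conjTranspose_nonsing_inv, hDh.eq, Matrix.mul_assoc]
    -- the strictly-negative subspace of H below -lam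
    obtain ⟨W, hWrank, hWneg⟩ := Fesh.exists_neg_subspace hHh (-lam)
    have hWneg' : ∀ v ∈ W, v ≠ 0 → Fesh.qf M v < 0 := by
      intro v hv hv0
      have h1 := hWneg v hv hv0
      have h2 : Fesh.qf M v = Fesh.qf H v + lam * Fesh.nsq v := Fesh.qf_smul_one_add H lam v
      nlinarith
    set rO : (Lam d L → ℂ) →ₗ[ℂ] (↥Ω → ℂ) :=
      LinearMap.funLeft ℂ ℂ (Subtype.val : ↥Ω → Lam d L) with hrO
    -- decomposition of the quadratic form
    have hdecomp : ∀ v : Lam d L → ℂ,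
        Fesh.qf M v = (star ((((blk Ωᶜ Ωᶜ M)⁻¹ * (blk Ω Ωᶜ M)ᴴ) *ᵥ (rO v)
            + (v ∘ (Subtype.val : ↥(Ωᶜ) → Lam d L)))) ᵥ* (blk Ωᶜ Ωᶜ M)
          ⬝ᵥ (((blk Ωᶜ Ωᶜ M)⁻¹ * (blk Ω Ωᶜ M)ᴴ) *ᵥ (rO v)
            + (v ∘ (Subtype.val : ↥(Ωᶜ) → Lam d L)))).re
          + Fesh.qf St (rO v) := by
      intro v
      have := Fesh.schur_key Ω M hMh v
      rw [Fesh.qf, this]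
      rw [Complex.add_re]
      congr 1
      rw [Fesh.qf, hSt, dotProduct_mulVec]
      rfl
    have hDterm : ∀ z : ↥(Ωᶜ) → ℂ, 0 ≤ (star z ᵥ* (blk Ωᶜ Ωᶜ M) ⬝ᵥ z).re := by
      intro z
      have := hDpd.posSemidef.re_dotProduct_nonneg z
      rw [dotProduct_mulVec] at this
      simpa [RCLike.re_to_complex] using this
    -- injectivity of restriction on W
    have hinj : ∀ v ∈ W, rO v = 0 → v = 0 := by
      intro v hv hv0
      by_contra hvne
      have h1 := hWneg' v hv hvne
      have h2 := hdecomp v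
      rw [hv0] at h2
      simp only [mulVec_zero, zero_add] at h2
      have h3 : Fesh.qf St (0 : ↥Ω → ℂ) = 0 := by
        simp [Fesh.qf]
      rw [h3, add_zero] at h2
      have h4 := hDterm (v ∘ (Subtype.val : ↥(Ωᶜ) → Lam d L))
      rw [← h2] at h4
      linarith
    -- W' and its properties
    set W' := W.map rO with hW'
    have hrankW' : Module.finrank ℂ ↥W' = Module.finrank ℂ ↥W := by
      have hinj2 : Function.Injective (rO.domRestrict W) := by
        rw [← LinearMap.ker_eq_bot, LinearMap.ker_eq_bot']
        intro m hm
        have := hinj m.1 m.2 hm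
        exact Subtype.ext this
      have := LinearMap.finrank_range_of_inj hinj2
      rw [LinearMap.range_domRestrict] at this
      exact this
    have hW'neg : ∀ u ∈ W', u ≠ 0 → Fesh.qf St u < 0 * Fesh.nsq u := by
      intro u hu hu0
      obtain ⟨v, hv, rfl⟩ := Submodule.mem_map.mp hu
      have hvne : v ≠ 0 := by
        rintro rfl
        exact hu0 (map_zero _)
      have h1 := hWneg' v hv hvne
      have h2 := hdecomp v
      have h4 := hDterm ((((blk Ωᶜ Ωᶜ M)⁻¹ * (blk Ω Ωᶜ M)ᴴ) *ᵥ (rO v)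
            + (v ∘ (Subtype.val : ↥(Ωᶜ) → Lam d L))))
      rw [zero_mul]
      linarith
    have hfinal := Fesh.finrank_le_negCount hSth 0 W' hW'neg
    rw [hrankW', hWrank] at hfinal
    exact hfinal
end
end

section
/- Let A ⊆ B ⊆ Λ and denote Δ_A := P_A Δ P_A and Δ_B := P_B Δ P_B. Then for every x ∈ A and every β > 0, the diagonal heat-kernel entries satisfy (e^{βΔ_A})_{x,x} ≤ (e^{βΔ_B})_{x,x}. -/
open Matrix
open scoped BigOperators Classical ComplexOrder

noncomputable section

namespace HeatAux

/-- The hopping matrix restricted to `A`, as a real matrix. -/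
def SR (d L : ℕ) (A : Set (Lam d L)) : Matrix (Lam d L) (Lam d L) ℝ :=
  Matrix.of fun x y => if x ∈ A ∧ y ∈ A ∧ isNN x y then (1 : ℝ) else 0

variable {d L : ℕ} [NeZero L]

lemma SR_nonneg (A : Set (Lam d L)) (x y : Lam d L) : 0 ≤ SR d L A x y := by
  simp only [SR, Matrix.of_apply]; split <;> norm_num

lemma SR_le_one (A : Set (Lam d L)) (x y : Lam d L) : SR d L A x y ≤ 1 := by
  simp only [SR, Matrix.of_apply]; split <;> norm_num

lemma SR_mono {A B : Set (Lam d L)} (hAB : A ⊆ B) (x y : Lam d L) :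
    SR d L A x y ≤ SR d L B x y := by
  simp only [SR, Matrix.of_apply]
  by_cases h : x ∈ A ∧ y ∈ A ∧ isNN x y
  · rw [if_pos h, if_pos ⟨hAB h.1, hAB h.2.1, h.2.2⟩]
  · rw [if_neg h]; exact SR_nonneg B x y

lemma pow_nonneg (A : Set (Lam d L)) (n : ℕ) (x y : Lam d L) :
    0 ≤ (SR d L A ^ n) x y := by
  induction n generalizing x y with
  | zero =>
    simp only [pow_zero, Matrix.one_apply]
    split <;> norm_num
  | succ n ih =>
    rw [pow_succ, Matrix.mul_apply]
    exact Finset.sum_nonneg fun z _ => mul_nonneg (ih x z) (SR_nonneg A z y)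

lemma pow_mono {A B : Set (Lam d L)} (hAB : A ⊆ B) (n : ℕ) (x y : Lam d L) :
    (SR d L A ^ n) x y ≤ (SR d L B ^ n) x y := by
  induction n generalizing x y with
  | zero => simp
  | succ n ih =>
    rw [pow_succ, pow_succ, Matrix.mul_apply, Matrix.mul_apply]
    refine Finset.sum_le_sum fun z _ => ?_
    exact mul_le_mul (ih x z) (SR_mono hAB z y) (SR_nonneg A z y) (pow_nonneg B n x z)

lemma pow_bound (A : Set (Lam d L)) (n : ℕ) (x y : Lam d L) :
    (SR d L A ^ n) x y ≤ (Fintype.card (Lam d L) : ℝ) ^ n := by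
  have hcard : (1 : ℝ) ≤ (Fintype.card (Lam d L) : ℝ) := by
    exact_mod_cast Fintype.card_pos
  induction n generalizing x y with
  | zero =>
    simp only [pow_zero, Matrix.one_apply]
    split <;> norm_num
  | succ n ih =>
    rw [pow_succ, Matrix.mul_apply, pow_succ]
    calc ∑ z, (SR d L A ^ n) x z * SR d L A z y
        ≤ ∑ _z : Lam d L, (Fintype.card (Lam d L) : ℝ) ^ n * 1 := by
          refine Finset.sum_le_sum fun z _ => ?_
          exact mul_le_mul (ih x z) (SR_le_one A z y) (SR_nonneg A z y)
            (by positivity)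
      _ = (Fintype.card (Lam d L) : ℝ) ^ n * (Fintype.card (Lam d L) : ℝ) := by
          simp [Finset.sum_const, mul_comm]

lemma map_pow' (S : Matrix (Lam d L) (Lam d L) ℝ) (n : ℕ) :
    (S.map Complex.ofReal) ^ n = (S ^ n).map Complex.ofReal := by
  have := map_pow (Complex.ofRealHom.mapMatrix :
    Matrix (Lam d L) (Lam d L) ℝ →+* Matrix (Lam d L) (Lam d L) ℂ) S n
  have h : (⇑Complex.ofRealHom) = Complex.ofReal := rfl
  simpa [RingHom.mapMatrix_apply, h] using this.symm

/-- The key analytic lemma: the real part of an entry of the matrix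
exponential as a sum of the entrywise power series. -/
lemma hasSum_exp_entry (S : Matrix (Lam d L) (Lam d L) ℝ)
    (hbd : ∀ n x y, |(S ^ n) x y| ≤ (Fintype.card (Lam d L) : ℝ) ^ n)
    (β : ℝ) (x y : Lam d L) :
    HasSum (fun n : ℕ => β ^ n * (((Nat.factorial n) : ℝ))⁻¹ * ((S ^ n) x y))
      (((NormedSpace.exp ((β : ℂ) • S.map Complex.ofReal)) x y).re) := by
  set M : Matrix (Lam d L) (Lam d L) ℂ := (β : ℂ) • S.map Complex.ofReal with hM
  have hent : ∀ (n : ℕ) (x y : Lam d L), ((((Nat.factorial n) : ℂ))⁻¹ • M ^ n) x y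
      = ((β ^ n * (((Nat.factorial n) : ℝ))⁻¹ * ((S ^ n) x y) : ℝ) : ℂ) := by
    intro n x y
    rw [hM, smul_pow, map_pow']
    simp only [Matrix.smul_apply, Matrix.map_apply, smul_eq_mul]
    push_cast
    ring
  set g : ℕ → Matrix (Lam d L) (Lam d L) ℂ := fun n => (((Nat.factorial n) : ℂ))⁻¹ • M ^ n with hg
  have hsum_entry : ∀ x y : Lam d L, Summable fun n => g n x y := by
    intro x y
    refine Summable.of_norm_bounded
      (g := fun n => (|β| * (Fintype.card (Lam d L) : ℝ)) ^ n / (Nat.factorial n))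
      (by simpa [div_eq_mul_inv] using
        Real.summable_pow_div_factorial (|β| * (Fintype.card (Lam d L) : ℝ)))
      fun n => ?_
    have hent' : g n x y = ((β ^ n * (((Nat.factorial n) : ℝ))⁻¹ * ((S ^ n) x y) : ℝ) : ℂ) := hent n x y
    rw [hent', Complex.norm_real, Real.norm_eq_abs]
    show _ ≤ (|β| * (Fintype.card (Lam d L) : ℝ)) ^ n / ((Nat.factorial n) : ℝ)
    rw [abs_mul, abs_mul, abs_pow, abs_inv, abs_of_nonneg (by positivity : (0:ℝ) ≤ ((Nat.factorial n) : ℝ))]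
    rw [mul_pow, div_eq_mul_inv]
    have h1 : |β| ^ n * (↑(Nat.factorial n))⁻¹ * |(S ^ n) x y|
        ≤ |β| ^ n * (↑(Nat.factorial n))⁻¹ * (Fintype.card (Lam d L) : ℝ) ^ n :=
      mul_le_mul_of_nonneg_left (hbd n x y) (by positivity)
    calc |β| ^ n * (↑(Nat.factorial n))⁻¹ * |(S ^ n) x y|
        ≤ |β| ^ n * (↑(Nat.factorial n))⁻¹ * (Fintype.card (Lam d L) : ℝ) ^ n := h1
      _ = |β| ^ n * (Fintype.card (Lam d L) : ℝ) ^ n * (↑(Nat.factorial n))⁻¹ := by ring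
  have hgsum : Summable g :=
    Pi.summable.2 fun x => Pi.summable.2 fun y => hsum_entry x y
  have hexp : HasSum g (NormedSpace.exp M) := by
    rw [NormedSpace.exp_eq_tsum ℂ]
    exact hgsum.hasSum
  have hxy : HasSum (fun n => g n x y) ((NormedSpace.exp M) x y) :=
    Pi.hasSum.1 (Pi.hasSum.1 hexp x) y
  have hre := Complex.hasSum_re hxy
  have hfun : (fun n => (g n x y).re)
      = fun n => β ^ n * (((Nat.factorial n) : ℝ))⁻¹ * ((S ^ n) x y) := by
    funext n
    show (((((Nat.factorial n) : ℂ))⁻¹ • M ^ n) x y).re = _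
    rw [hent n x y, Complex.ofReal_re]
  exact hfun ▸ hre

lemma SR_pow_abs (A : Set (Lam d L)) (n : ℕ) (x y : Lam d L) :
    |(SR d L A ^ n) x y| ≤ (Fintype.card (Lam d L) : ℝ) ^ n := by
  rw [abs_of_nonneg (pow_nonneg A n x y)]
  exact pow_bound A n x y

lemma proj_mul_lap_mul_proj (A : Set (Lam d L)) :
    proj A * lap d L * proj A
      = (SR d L A).map Complex.ofReal + (-(2 * (d : ℂ))) • proj A := by
  ext x y
  simp only [lap, Matrix.mul_sub, Matrix.sub_mul, Matrix.mul_smul, Matrix.smul_mul,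
    Matrix.mul_one, Matrix.sub_apply, Matrix.add_apply, Matrix.smul_apply, proj,
    Matrix.diagonal_mul, Matrix.mul_diagonal, Matrix.diagonal_apply, Matrix.of_apply,
    Matrix.map_apply, SR, smul_eq_mul]
  by_cases hx : x ∈ A <;> by_cases hy : y ∈ A <;> by_cases hxy : x = y <;>
    by_cases hnn : isNN x y <;>
      simp [hx, hy, hxy, hnn] <;> split_ifs <;> push_cast <;> ring

lemma proj_comm (A : Set (Lam d L)) :
    (SR d L A).map Complex.ofReal * proj A = proj A * (SR d L A).map Complex.ofReal := by
  ext x y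
  unfold proj
  rw [Matrix.diagonal_mul, Matrix.mul_diagonal]
  simp only [Matrix.map_apply, SR, Matrix.of_apply]
  by_cases hx : x ∈ A <;> by_cases hy : y ∈ A <;> simp [hx, hy]

/-- The exponential factorization at a diagonal entry inside `A`. -/
lemma exp_entry_eq (A : Set (Lam d L)) (x : Lam d L) (hx : x ∈ A) (β : ℝ) :
    (NormedSpace.exp ((β : ℂ) • (proj A * lap d L * proj A))) x x
      = (NormedSpace.exp ((β : ℂ) • (SR d L A).map Complex.ofReal)) x x
          * (Real.exp (-(2 * d * β)) : ℝ) := by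
  rw [proj_mul_lap_mul_proj, smul_add, smul_smul]
  have hcomm : Commute ((β : ℂ) • (SR d L A).map Complex.ofReal)
      (((β : ℂ) * (-(2 * (d : ℂ)))) • proj A) := by
    unfold Commute SemiconjBy
    rw [Matrix.smul_mul, Matrix.mul_smul, Matrix.smul_mul, Matrix.mul_smul, proj_comm A]
    rw [smul_comm]
  rw [Matrix.exp_add_of_commute _ _ hcomm]
  have hdiag : ((β : ℂ) * (-(2 * (d : ℂ)))) • proj A
      = Matrix.diagonal (fun z => if z ∈ A then (β : ℂ) * (-(2 * (d : ℂ))) else 0) := by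
    unfold proj
    ext i j
    simp only [Matrix.smul_apply, Matrix.diagonal_apply, smul_eq_mul]
    split_ifs <;> simp_all
  rw [hdiag, Matrix.exp_diagonal, Matrix.mul_apply]
  rw [Finset.sum_eq_single x]
  · rw [Matrix.diagonal_apply_eq]
    congr 1
    rw [Pi.coe_exp]
    simp only [hx, if_true]
    rw [← Complex.exp_eq_exp_ℂ]
    rw [show (β : ℂ) * (-(2 * (d : ℂ))) = ((-(2 * d * β) : ℝ) : ℂ) by push_cast; ring]
    exact (Complex.ofReal_exp _).symm
  · intro b _ hb; simp [Matrix.diagonal_apply_ne _ hb]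
  · intro h; simp at h

end HeatAux

/-- Lemma 3.4, domain monotonicity of the heat kernel: for
`A ⊆ B ⊆ Λ`, `x ∈ A` and `β > 0`, `(e^{βΔ_A})_{x,x} ≤ (e^{βΔ_B})_{x,x}`. -/
theorem heat_kernel_domain_monotone (d L : ℕ) (hd : 1 ≤ d) [NeZero L]
    (hLeven : Even L) (hL2 : 2 ≤ L) (A B : Set (Lam d L)) (hAB : A ⊆ B)
    (x : Lam d L) (hx : x ∈ A) (β : ℝ) (hβ : 0 < β) :
    ((NormedSpace.exp ((β : ℂ) • (proj A * lap d L * proj A))) x x).re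
      ≤ ((NormedSpace.exp ((β : ℂ) • (proj B * lap d L * proj B))) x x).re := by
  rw [HeatAux.exp_entry_eq A x hx β, HeatAux.exp_entry_eq B x (hAB hx) β]
  have hA := HeatAux.hasSum_exp_entry (HeatAux.SR d L A)
    (HeatAux.SR_pow_abs A) β x x
  have hB := HeatAux.hasSum_exp_entry (HeatAux.SR d L B)
    (HeatAux.SR_pow_abs B) β x x
  have hle : ((NormedSpace.exp ((β : ℂ) • (HeatAux.SR d L A).map Complex.ofReal)) x x).re
      ≤ ((NormedSpace.exp ((β : ℂ) • (HeatAux.SR d L B).map Complex.ofReal)) x x).re := by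
    refine hasSum_le (fun n => ?_) hA hB
    refine mul_le_mul_of_nonneg_left (HeatAux.pow_mono hAB n x x) ?_
    positivity
  have hr : (0 : ℝ) ≤ Real.exp (-(2 * d * β)) := (Real.exp_pos _).le
  calc ((NormedSpace.exp ((β : ℂ) • (HeatAux.SR d L A).map Complex.ofReal)) x x
        * ((Real.exp (-(2 * d * β)) : ℝ) : ℂ)).re
      = ((NormedSpace.exp ((β : ℂ) • (HeatAux.SR d L A).map Complex.ofReal)) x x).re
        * Real.exp (-(2 * d * β)) := by
        simp only [Complex.mul_re, Complex.ofReal_re, Complex.ofReal_im, mul_zero, sub_zero]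
    _ ≤ ((NormedSpace.exp ((β : ℂ) • (HeatAux.SR d L B).map Complex.ofReal)) x x).re
        * Real.exp (-(2 * d * β)) := mul_le_mul_of_nonneg_right hle hr
    _ = ((NormedSpace.exp ((β : ℂ) • (HeatAux.SR d L B).map Complex.ofReal)) x x
        * ((Real.exp (-(2 * d * β)) : ℝ) : ℂ)).re := by
        simp only [Complex.mul_re, Complex.ofReal_re, Complex.ofReal_im, mul_zero, sub_zero]
end
end

section
/- Let Ω ⊆ Λ, let k ∈ Λ* := (2π/L)·(ℤ/Lℤ)^d, let ψ_k ∈ ℂ^Λ be the normalized plane wave ψ_k(x) := |Λ|^{-1/2} e^{-ik·x}, and define the boundary vector b_k := P_{∂Ω} Δ P_{Ω^c} ψ_k. If ω(k) := Σ_{ν=1}^d 2(1 - cos k_ν) ≤ 1/2, then ‖b_k‖² ≥ |∂Ω|/(4|Λ|). -/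
open Matrix
open scoped BigOperators Classical ComplexOrder

noncomputable section

/-- The normalized plane wave `ψ_k(x) = |Λ|^{-1/2} e^{-ik·x}` on `Λ = (ℤ/Lℤ)^d`, for
`k = (2π/L)κ ∈ Λ*` with `κ ∈ (ℤ/Lℤ)^d`. -/
def planeWave (d L : ℕ) [NeZero L] (κ : Lam d L) : Lam d L → ℂ :=
  fun x => ((Real.sqrt ((L : ℝ) ^ d))⁻¹ : ℝ) *
    Complex.exp (-Complex.I * ((2 * Real.pi / L : ℝ) : ℂ) *
      ((∑ ν, (κ ν).val * (x ν).val : ℕ) : ℂ))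

lemma diff_sum {d L : ℕ} [NeZero L] (κ x y : Lam d L) (ν : Fin d)
    (hc : x ν = y ν + 1 ∨ x ν + 1 = y ν) (hoth : ∀ μ : Fin d, μ ≠ ν → x μ = y μ) :
    ∃ ε : ℤ, (ε = 1 ∨ ε = -1) ∧ ∃ m : ℤ,
      ((∑ μ, (κ μ).val * (x μ).val : ℕ) : ℤ) - ((∑ μ, (κ μ).val * (y μ).val : ℕ) : ℤ)
        = ε * ((κ ν).val : ℤ) + L * m := by
  have hsum : ((∑ μ, (κ μ).val * (x μ).val : ℕ) : ℤ) - ((∑ μ, (κ μ).val * (y μ).val : ℕ) : ℤ)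
      = ((κ ν).val : ℤ) * (((x ν).val : ℤ) - ((y ν).val : ℤ)) := by
    push_cast
    rw [← Finset.sum_sub_distrib]
    rw [Finset.sum_eq_single ν]
    · ring
    · intro μ _ hμ
      rw [hoth μ hμ]; ring
    · simp
  rcases hc with h | h
  · have hmod : ((x ν).val : ZMod L) = (((y ν).val + 1 : ℕ) : ZMod L) := by
      push_cast [ZMod.natCast_val, ZMod.cast_id]
      exact h
    obtain ⟨m, hm⟩ := ((ZMod.natCast_eq_natCast_iff _ _ _).mp hmod).dvd
    refine ⟨1, Or.inl rfl, ((κ ν).val : ℤ) * (-m), ?_⟩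
    rw [hsum]
    have : ((x ν).val : ℤ) - ((y ν).val : ℤ) = 1 - (L : ℤ) * m := by push_cast at hm ⊢; linarith
    rw [this]; ring
  · have hmod : (((x ν).val + 1 : ℕ) : ZMod L) = (((y ν).val : ℕ) : ZMod L) := by
      push_cast [ZMod.natCast_val, ZMod.cast_id]
      exact h
    obtain ⟨m, hm⟩ := ((ZMod.natCast_eq_natCast_iff _ _ _).mp hmod).dvd
    refine ⟨-1, Or.inr rfl, -(((κ ν).val : ℤ) * m), ?_⟩
    rw [hsum]
    have : ((x ν).val : ℤ) - ((y ν).val : ℤ) = -1 - (L : ℤ) * m := by push_cast at hm ⊢; linarith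
    rw [this]; ring

lemma pw_inner {d L : ℕ} [NeZero L] (κ x y : Lam d L) (h : isNN x y) :
    ∃ ν : Fin d, ((starRingEnd ℂ) (planeWave d L κ x) * planeWave d L κ y).re
      = ((L : ℝ) ^ d)⁻¹ * Real.cos (2 * Real.pi * (κ ν).val / L) := by
  obtain ⟨ν, hc, hoth⟩ := h
  obtain ⟨ε, hε, m, hm⟩ := diff_sum κ x y ν hc hoth
  refine ⟨ν, ?_⟩
  have hL : (L : ℝ) ≠ 0 := Nat.cast_ne_zero.mpr (NeZero.ne L)
  have hLC : (L : ℂ) ≠ 0 := Nat.cast_ne_zero.mpr (NeZero.ne L)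
  have e1 : (starRingEnd ℂ) (planeWave d L κ x) * planeWave d L κ y
      = (((Real.sqrt ((L : ℝ) ^ d))⁻¹ ^ 2 : ℝ) : ℂ) *
        Complex.exp (Complex.I * ((2 * Real.pi / L : ℝ) : ℂ)
            * ((∑ μ, (κ μ).val * (x μ).val : ℕ) : ℂ)
          - Complex.I * ((2 * Real.pi / L : ℝ) : ℂ)
            * ((∑ μ, (κ μ).val * (y μ).val : ℕ) : ℂ)) := by
    unfold planeWave
    rw [_root_.map_mul, ← Complex.exp_conj]
    simp only [_root_.map_mul, Complex.conj_ofReal, map_neg, Complex.conj_I, Complex.conj_natCast]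
    rw [mul_mul_mul_comm, ← Complex.exp_add]
    push_cast
    ring_nf
  have e2 : Complex.I * ((2 * Real.pi / L : ℝ) : ℂ) * ((∑ μ, (κ μ).val * (x μ).val : ℕ) : ℂ)
        - Complex.I * ((2 * Real.pi / L : ℝ) : ℂ) * ((∑ μ, (κ μ).val * (y μ).val : ℕ) : ℂ)
      = (((ε : ℝ) * (2 * Real.pi * (κ ν).val / L) : ℝ) : ℂ) * Complex.I
        + ((m : ℂ)) * (2 * Real.pi * Complex.I) := by
    have hab : ((∑ μ, (κ μ).val * (x μ).val : ℕ) : ℂ) - ((∑ μ, (κ μ).val * (y μ).val : ℕ) : ℂ)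
        = ((ε * ((κ ν).val : ℤ) + L * m : ℤ) : ℂ) := by exact_mod_cast congrArg (Int.cast : ℤ → ℂ) hm
    have : Complex.I * ((2 * Real.pi / L : ℝ) : ℂ) * ((∑ μ, (κ μ).val * (x μ).val : ℕ) : ℂ)
        - Complex.I * ((2 * Real.pi / L : ℝ) : ℂ) * ((∑ μ, (κ μ).val * (y μ).val : ℕ) : ℂ)
        = Complex.I * ((2 * Real.pi / L : ℝ) : ℂ)
          * (((∑ μ, (κ μ).val * (x μ).val : ℕ) : ℂ) - ((∑ μ, (κ μ).val * (y μ).val : ℕ) : ℂ)) := by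
      ring
    rw [this, hab]
    push_cast
    field_simp
  rw [e1, e2, Complex.exp_add, Complex.exp_int_mul_two_pi_mul_I, mul_one,
    Complex.re_ofReal_mul, Complex.exp_ofReal_mul_I_re]
  have hr2 : (Real.sqrt ((L : ℝ) ^ d))⁻¹ ^ 2 = ((L : ℝ) ^ d)⁻¹ := by
    rw [inv_pow, Real.sq_sqrt (by positivity)]
  rw [hr2]
  rcases hε with rfl | rfl
  · norm_num
  · push_cast
    rw [neg_one_mul, Real.cos_neg]

lemma pw_norm {d L : ℕ} [NeZero L] (κ : Lam d L) (x : Lam d L) :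
    ‖planeWave d L κ x‖ = (Real.sqrt ((L : ℝ) ^ d))⁻¹ := by
  unfold planeWave
  rw [norm_mul]
  rw [Complex.norm_exp]
  have : (-Complex.I * ((2 * Real.pi / L : ℝ) : ℂ) * ((∑ ν, (κ ν).val * (x ν).val : ℕ) : ℂ)).re
      = 0 := by
    have hz : -Complex.I * ((2 * Real.pi / L : ℝ) : ℂ) * ((∑ ν, (κ ν).val * (x ν).val : ℕ) : ℂ)
        = ((-(2 * Real.pi / L * ((∑ ν, (κ ν).val * (x ν).val : ℕ) : ℝ)) : ℝ) : ℂ) * Complex.I := by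
      push_cast; ring
    rw [hz]
    simp [Complex.mul_re]
  rw [this, Real.exp_zero, mul_one, Complex.norm_real, Real.norm_eq_abs, abs_of_nonneg (by positivity)]

/-- Eq. (3.68), lower bound on the boundary vector: for
`k = (2π/L)κ ∈ Λ*` with `ω(k) = Σ_ν 2(1-cos k_ν) ≤ 1/2`, the boundary vector
`b_k = P_{∂Ω} Δ P_{Ω^c} ψ_k` satisfies `‖b_k‖² ≥ |∂Ω|/(4|Λ|)`. -/
theorem boundary_vector_lower_bound (d L : ℕ) (hd : 1 ≤ d) [NeZero L]
    (hLeven : Even L) (hL2 : 2 ≤ L) (Ω : Set (Lam d L)) (κ : Lam d L)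
    (hω : (∑ ν, 2 * (1 - Real.cos (2 * Real.pi * (κ ν).val / L))) ≤ 1 / 2) :
    ((bdry Ω).ncard : ℝ) / (4 * (L : ℝ) ^ d) ≤
      ∑ x, ‖(proj (bdry Ω) * lap d L * proj Ωᶜ).mulVec (planeWave d L κ) x‖ ^ 2 := by
  set ψ := planeWave d L κ with hψ
  set b := (proj (bdry Ω) * lap d L * proj Ωᶜ).mulVec ψ with hbdef
  set X : ℝ := (L : ℝ) ^ d with hX
  have hXpos : 0 < X := by positivity
  set s : ℝ := Real.sqrt X with hs
  have hspos : 0 < s := Real.sqrt_pos.mpr hXpos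
  have hs2 : s ^ 2 = X := Real.sq_sqrt hXpos.le
  -- cosine lower bound
  have hcos : ∀ ν : Fin d, (3 : ℝ) / 4 ≤ Real.cos (2 * Real.pi * (κ ν).val / L) := by
    intro ν
    have h1 : 2 * (1 - Real.cos (2 * Real.pi * (κ ν).val / L)) ≤ 1 / 2 := by
      refine le_trans (Finset.single_le_sum (f := fun μ : Fin d =>
        2 * (1 - Real.cos (2 * Real.pi * (κ μ).val / L))) ?_ (Finset.mem_univ ν)) hω
      intro i _
      nlinarith [Real.cos_le_one (2 * Real.pi * (κ i).val / L)]
    linarith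
  -- per-point bound
  have hpoint : ∀ x ∈ bdry Ω, 1 / (4 * X) ≤ ‖b x‖ ^ 2 := by
    intro x hx
    have hbx : b x = ∑ y, (if isNN x y ∧ y ∈ Ωᶜ then ψ y else 0) := by
      rw [hbdef, Matrix.mulVec, dotProduct]
      refine Finset.sum_congr rfl ?_
      intro y _
      have hent : (proj (bdry Ω) * lap d L * proj Ωᶜ) x y
          = (if x ∈ bdry Ω then 1 else 0) * (lap d L x y * (if y ∈ Ωᶜ then 1 else 0)) := by
        rw [Matrix.mul_assoc, proj, proj, Matrix.diagonal_mul, Matrix.mul_diagonal]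
        congr
      rw [hent]
      by_cases hyc : y ∈ Ωᶜ
      · have hxy : x ≠ y := fun e => hyc (e ▸ hx.1)
        have hlap : lap d L x y = if isNN x y then 1 else 0 := by
          simp [lap, Matrix.sub_apply, Matrix.smul_apply, Matrix.one_apply_ne hxy]
        simp only [hlap, if_pos hx, if_pos hyc, hxy]
        by_cases hnn : isNN x y <;> simp [hnn, hyc]
      · simp [hyc]
    -- real part lower bound
    have hre : (3 : ℝ) / 4 * X⁻¹ ≤ ((starRingEnd ℂ) (ψ x) * b x).re := by
      rw [hbx, Finset.mul_sum, Complex.re_sum]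
      obtain ⟨y0, hy0, hnn0⟩ := hx.2
      have hy0c : y0 ∈ Ωᶜ := hy0
      have hterm : ∀ y, (0 : ℝ) ≤ ((starRingEnd ℂ) (ψ x) * if isNN x y ∧ y ∈ Ωᶜ then ψ y else 0).re ∧
          ((isNN x y ∧ y ∈ Ωᶜ) →
            (3 : ℝ) / 4 * X⁻¹ ≤ ((starRingEnd ℂ) (ψ x) * if isNN x y ∧ y ∈ Ωᶜ then ψ y else 0).re) := by
        intro y
        by_cases hP : isNN x y ∧ y ∈ Ωᶜ
        · obtain ⟨ν, hν⟩ := pw_inner κ x y hP.1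
          rw [if_pos hP]
          constructor
          · rw [hψ, hν]
            have := hcos ν
            have h1 : Real.cos (2 * Real.pi * (κ ν).val / L) ≥ 0 := by linarith
            positivity
          · intro _
            rw [hψ, hν, ← hX]
            have := hcos ν
            have hXinv : (0:ℝ) ≤ X⁻¹ := by positivity
            calc (3:ℝ)/4 * X⁻¹ = X⁻¹ * (3/4) := by ring
              _ ≤ X⁻¹ * Real.cos (2 * Real.pi * (κ ν).val / L) :=
                  mul_le_mul_of_nonneg_left (hcos ν) hXinv
        · rw [if_neg hP]
          exact ⟨by simp, fun hPP => absurd hPP hP⟩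
      calc (3 : ℝ) / 4 * X⁻¹
          ≤ ((starRingEnd ℂ) (ψ x) * if isNN x y0 ∧ y0 ∈ Ωᶜ then ψ y0 else 0).re :=
            (hterm y0).2 ⟨hnn0, hy0c⟩
        _ ≤ ∑ y, ((starRingEnd ℂ) (ψ x) * if isNN x y ∧ y ∈ Ωᶜ then ψ y else 0).re :=
            Finset.single_le_sum (fun y _ => (hterm y).1) (Finset.mem_univ y0)
    -- from real part to norm
    have habs : ((starRingEnd ℂ) (ψ x) * b x).re ≤ s⁻¹ * ‖b x‖ := by
      calc ((starRingEnd ℂ) (ψ x) * b x).re ≤ ‖(starRingEnd ℂ) (ψ x) * b x‖ :=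
            Complex.re_le_norm _
        _ = ‖ψ x‖ * ‖b x‖ := by rw [norm_mul, RCLike.norm_conj]
        _ = s⁻¹ * ‖b x‖ := by rw [hψ, pw_norm, ← hX, ← hs]
    have hA : (3 : ℝ) / 4 * X⁻¹ ≤ s⁻¹ * ‖b x‖ := le_trans hre habs
    have hn : (0 : ℝ) ≤ ‖b x‖ := norm_nonneg _
    have h2 : (3 : ℝ) / 4 ≤ s * ‖b x‖ := by
      have := mul_le_mul_of_nonneg_left hA hspos.le
      have hXs : X⁻¹ = s⁻¹ * s⁻¹ := by
        rw [← hs2]; field_simp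
      rw [hXs] at this
      have hss : s * (s⁻¹ * ‖b x‖) = ‖b x‖ := by field_simp
      have hss2 : s * (3 / 4 * (s⁻¹ * s⁻¹)) = 3 / 4 * s⁻¹ := by field_simp
      rw [hss, hss2] at this
      calc (3:ℝ)/4 = s * (3/4 * s⁻¹) := by field_simp
        _ ≤ s * ‖b x‖ := mul_le_mul_of_nonneg_left this hspos.le
    rw [div_le_iff₀ (by positivity)]
    have h3 : (3/4 : ℝ) * (3/4) ≤ (s * ‖b x‖) * (s * ‖b x‖) :=
      mul_le_mul h2 h2 (by norm_num) (le_trans (by norm_num) h2)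
    nlinarith [hs2, h3]
  -- summation
  have hfin : (bdry Ω).Finite := Set.toFinite _
  rw [Set.ncard_eq_toFinset_card' (bdry Ω)]
  calc ((bdry Ω).toFinset.card : ℝ) / (4 * X)
      = ∑ _x ∈ (bdry Ω).toFinset, 1 / (4 * X) := by
        rw [Finset.sum_const, nsmul_eq_mul]; ring
    _ ≤ ∑ x ∈ (bdry Ω).toFinset, ‖b x‖ ^ 2 :=
        Finset.sum_le_sum (fun x hxmem => hpoint x (Set.mem_toFinset.mp hxmem))
    _ ≤ ∑ x, ‖b x‖ ^ 2 :=
        Finset.sum_le_sum_of_subset_of_nonneg (Finset.subset_univ _)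
          (fun x _ _ => by positivity)
end
end
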